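/- arXiv:2511.12064 — 6 statements merged into one kernel-verified Lean document; each statement's English description precedes it below -/
import Mathlib

section
/- For any symmetric convex function f : ℝ^n → ℝ ∪ {∞} (invariant under coordinate permutations), the function F on n×n Hermitian matrices defined by F(X) = f(λ(X)), where λ(X) is the eigenvalue vector of X, is convex and unitarily invariant: F(kXk†) = F(X) for all unitary k. -/
open scoped BigOperators

private lemma coe_mul_add' (t : ℝ) (ht : 0 ≤ t) (x y : EReal) :
    (t : EReal) * (x + y) = (t:EReal) * x + (t:EReal) * y := by
  rcases ht.eq_or_lt with h | h
  · simp [← h]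
  · induction x using EReal.rec <;> induction y using EReal.rec <;>
      simp_all [EReal.mul_bot_of_pos, EReal.mul_top_of_pos, ← EReal.coe_mul, ← EReal.coe_add,
        mul_add, EReal.coe_add_top, EReal.top_add_coe, EReal.bot_add]

private lemma coe_mul_sum' (t : ℝ) (ht : 0 ≤ t) {ι : Type*} (s : Finset ι) (g : ι → EReal) :
    (t : EReal) * ∑ i ∈ s, g i = ∑ i ∈ s, (t:EReal) * g i := by
  induction s using Finset.cons_induction with
  | empty => simp
  | cons a s ha ih => rw [Finset.sum_cons, Finset.sum_cons, coe_mul_add' t ht, ih]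

private lemma sum_coe_mul' {ι : Type*} (s : Finset ι) (g : ι → ℝ) (hg : ∀ i ∈ s, 0 ≤ g i)
    (c : EReal) :
    ∑ i ∈ s, (g i : EReal) * c = ((∑ i ∈ s, g i : ℝ) : EReal) * c := by
  induction s using Finset.cons_induction with
  | empty => simp
  | cons a s ha ih =>
      rw [Finset.sum_cons, Finset.sum_cons, ih (fun i hi => hg i (Finset.mem_cons_of_mem hi)),
        EReal.coe_add, EReal.right_distrib_of_nonneg
          (by exact_mod_cast hg a (Finset.mem_cons_self a s))
          (by exact_mod_cast Finset.sum_nonneg (fun i hi => hg i (Finset.mem_cons_of_mem hi)))]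

private lemma jensen' {n : ℕ} (f : (Fin n → ℝ) → EReal)
    (hconv : ∀ (x y : Fin n → ℝ) (a b : ℝ), 0 ≤ a → 0 ≤ b → a + b = 1 →
      f (a • x + b • y) ≤ (a : EReal) * f x + (b : EReal) * f y)
    {ι : Type*} (s : Finset ι) (w : ι → ℝ) (x : ι → Fin n → ℝ)
    (hw0 : ∀ i ∈ s, 0 ≤ w i) (hw1 : ∑ i ∈ s, w i = 1) :
    f (∑ i ∈ s, w i • x i) ≤ ∑ i ∈ s, (w i : EReal) * f (x i) := by
  induction s using Finset.cons_induction generalizing w with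
  | empty => simp at hw1
  | cons a s ha ih =>
    rw [Finset.sum_cons] at hw1
    have hwa : 0 ≤ w a := hw0 a (Finset.mem_cons_self a s)
    have hws : ∀ i ∈ s, 0 ≤ w i := fun i hi => hw0 i (Finset.mem_cons_of_mem hi)
    set t : ℝ := ∑ i ∈ s, w i with hts
    have ht0 : 0 ≤ t := Finset.sum_nonneg hws
    rcases ht0.eq_or_lt with h | h
    · have hz : ∀ i ∈ s, w i = 0 := by
        intro i hi
        exact le_antisymm (by
          calc w i ≤ ∑ j ∈ s, w j := Finset.single_le_sum hws hi
          _ = 0 := h.symm) (hws i hi)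
      have hwa1 : w a = 1 := by rw [← hw1, ← h]; ring
      rw [Finset.sum_cons, Finset.sum_cons]
      have h2 : ∑ i ∈ s, w i • x i = 0 := Finset.sum_eq_zero fun i hi => by rw [hz i hi, zero_smul]
      have h3 : ∑ i ∈ s, (w i : EReal) * f (x i) = 0 := Finset.sum_eq_zero fun i hi => by
        rw [hz i hi]; simp
      rw [h2, h3, hwa1, add_zero, add_zero, one_smul]
      simp
    · have key : ∑ i ∈ s, w i • x i = t • ∑ i ∈ s, (w i / t) • x i := by
        rw [Finset.smul_sum]
        refine Finset.sum_congr rfl fun i hi => ?_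
        rw [smul_smul, mul_div_cancel₀ _ h.ne']
      rw [Finset.sum_cons, key, Finset.sum_cons]
      have step1 := hconv (x a) (∑ i ∈ s, (w i / t) • x i) (w a) t hwa ht0 hw1
      refine step1.trans ?_
      have step2 : f (∑ i ∈ s, (w i / t) • x i) ≤ ∑ i ∈ s, ((w i / t : ℝ) : EReal) * f (x i) :=
        ih (fun i => w i / t) (fun i hi => div_nonneg (hws i hi) ht0)
          (by rw [← Finset.sum_div, ← hts, div_self h.ne'])
      have step3 : (t : EReal) * f (∑ i ∈ s, (w i / t) • x i)
          ≤ ∑ i ∈ s, (w i : EReal) * f (x i) := by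
        calc (t : EReal) * f (∑ i ∈ s, (w i / t) • x i)
            ≤ (t : EReal) * ∑ i ∈ s, ((w i / t : ℝ) : EReal) * f (x i) :=
              mul_le_mul_of_nonneg_left step2 (by exact_mod_cast ht0)
          _ = ∑ i ∈ s, (t : EReal) * (((w i / t : ℝ) : EReal) * f (x i)) := coe_mul_sum' t ht0 _ _
          _ = ∑ i ∈ s, (w i : EReal) * f (x i) := Finset.sum_congr rfl fun i hi => by
              rw [← mul_assoc, ← EReal.coe_mul, mul_div_cancel₀ _ h.ne']
      exact add_le_add le_rfl step3

private lemma normSq_doublyStochastic {n : ℕ} (W : Matrix (Fin n) (Fin n) ℂ)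
    (hW : W ∈ Matrix.unitaryGroup (Fin n) ℂ) :
    (Matrix.of fun i j => Complex.normSq (W i j)) ∈ doublyStochastic ℝ (Fin n) := by
  rw [mem_doublyStochastic_iff_sum]
  refine ⟨fun i j => Complex.normSq_nonneg _, fun i => ?_, fun j => ?_⟩
  · have h1 : W * star W = 1 := Matrix.mem_unitaryGroup_iff.mp hW
    have h2 := congrFun (congrFun h1 i) i
    simp only [Matrix.mul_apply, Matrix.star_apply, Matrix.one_apply_eq] at h2
    have : (((∑ j, Complex.normSq (W i j) : ℝ)) : ℂ) = 1 := by
      push_cast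
      rw [← h2]
      exact Finset.sum_congr rfl fun j _ => by
        rw [Complex.star_def]; exact (Complex.mul_conj _).symm
    exact_mod_cast this
  · have h1 : star W * W = 1 := Matrix.mem_unitaryGroup_iff'.mp hW
    have h2 := congrFun (congrFun h1 j) j
    simp only [Matrix.mul_apply, Matrix.star_apply, Matrix.one_apply_eq] at h2
    have : (((∑ i, Complex.normSq (W i j) : ℝ)) : ℂ) = 1 := by
      push_cast
      rw [← h2]
      exact Finset.sum_congr rfl fun i _ => by
        rw [Complex.star_def]; exact Complex.normSq_eq_conj_mul_self
    exact_mod_cast this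

/-- Schur–Horn style inequality via Birkhoff's theorem. -/
private lemma schur_step {n : ℕ} (f : (Fin n → ℝ) → EReal)
    (hconv : ∀ (x y : Fin n → ℝ) (a b : ℝ), 0 ≤ a → 0 ≤ b → a + b = 1 →
      f (a • x + b • y) ≤ (a : EReal) * f x + (b : EReal) * f y)
    (hsym : ∀ (σ : Equiv.Perm (Fin n)) (x : Fin n → ℝ), f (x ∘ σ) = f x)
    (W : Matrix (Fin n) (Fin n) ℂ) (hW : W ∈ Matrix.unitaryGroup (Fin n) ℂ)
    (μ : Fin n → ℝ) :
    f (fun i => ∑ j, Complex.normSq (W i j) * μ j) ≤ f μ := by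
  obtain ⟨w, hw0, hw1, hwS⟩ :=
    exists_eq_sum_perm_of_mem_doublyStochastic (normSq_doublyStochastic W hW)
  have hd : (fun i => ∑ j, Complex.normSq (W i j) * μ j) = ∑ σ, w σ • (μ ∘ σ) := by
    funext i
    have hSij : ∀ j, Complex.normSq (W i j) = ∑ σ : Equiv.Perm (Fin n),
        w σ * (σ.permMatrix ℝ) i j := by
      intro j
      have h := congrFun (congrFun hwS i) j
      calc Complex.normSq (W i j) = (∑ σ : Equiv.Perm (Fin n), w σ • σ.permMatrix ℝ) i j :=
            h.symm
        _ = ∑ σ : Equiv.Perm (Fin n), w σ * (σ.permMatrix ℝ) i j := by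
            simp [Matrix.sum_apply]
    calc ∑ j, Complex.normSq (W i j) * μ j
        = ∑ j, ∑ σ : Equiv.Perm (Fin n), w σ * (σ.permMatrix ℝ) i j * μ j := by
          refine Finset.sum_congr rfl fun j _ => ?_
          rw [hSij j, Finset.sum_mul]
      _ = ∑ σ : Equiv.Perm (Fin n), ∑ j, w σ * (σ.permMatrix ℝ) i j * μ j := Finset.sum_comm
      _ = ∑ σ : Equiv.Perm (Fin n), w σ * μ (σ i) := by
          refine Finset.sum_congr rfl fun σ _ => ?_
          have : ∀ j, w σ * (σ.permMatrix ℝ) i j * μ j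
              = w σ * ((if σ i = j then 1 else 0) * μ j) := fun j => by
            simp [Equiv.Perm.permMatrix, PEquiv.toMatrix_apply, Equiv.toPEquiv_apply, mul_assoc]
          simp only [this, ← Finset.mul_sum, ite_mul, one_mul, zero_mul,
            Finset.sum_ite_eq, Finset.mem_univ, if_true]
      _ = (∑ σ : Equiv.Perm (Fin n), w σ • (μ ∘ σ)) i := by
          simp [Finset.sum_apply]
  rw [hd]
  calc f (∑ σ : Equiv.Perm (Fin n), w σ • (μ ∘ σ))
      ≤ ∑ σ : Equiv.Perm (Fin n), (w σ : EReal) * f (μ ∘ σ) :=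
        jensen' f hconv Finset.univ w (fun σ => μ ∘ σ) (fun σ _ => hw0 σ) hw1
    _ = ∑ σ : Equiv.Perm (Fin n), (w σ : EReal) * f μ := by
        refine Finset.sum_congr rfl fun σ _ => by rw [hsym σ μ]
    _ = ((∑ σ : Equiv.Perm (Fin n), w σ : ℝ) : EReal) * f μ :=
        sum_coe_mul' _ _ (fun σ _ => hw0 σ) _
    _ = f μ := by rw [hw1]; simp

/-- diagonal entries of `V X V*` in terms of eigenvalues. -/
private lemma diag_re_eq {n : ℕ} (X : Matrix (Fin n) (Fin n) ℂ) (hX : X.IsHermitian)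
    (V : Matrix (Fin n) (Fin n) ℂ) :
    (fun i => ((V * X * star V) i i).re)
      = fun i => ∑ j, Complex.normSq ((V * (hX.eigenvectorUnitary : Matrix (Fin n) (Fin n) ℂ)) i j)
          * hX.eigenvalues j := by
  set U : Matrix (Fin n) (Fin n) ℂ := (hX.eigenvectorUnitary : Matrix (Fin n) (Fin n) ℂ) with hU
  set W : Matrix (Fin n) (Fin n) ℂ := V * U with hWdef
  have hconj : V * X * star V = W * Matrix.diagonal ((RCLike.ofReal : ℝ → ℂ) ∘ hX.eigenvalues) * star W := by
    conv_lhs => rw [hX.spectral_theorem]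
    rw [hWdef, star_mul]
    simp only [Unitary.conjStarAlgAut_apply, Matrix.mul_assoc, hU]
  funext i
  rw [hconj]
  have hentry : (W * Matrix.diagonal ((RCLike.ofReal : ℝ → ℂ) ∘ hX.eigenvalues) * star W) i i
      = ∑ j, ((Complex.normSq (W i j) * hX.eigenvalues j : ℝ) : ℂ) := by
    rw [Matrix.mul_apply]
    refine Finset.sum_congr rfl fun j _ => ?_
    rw [Matrix.mul_diagonal, Matrix.star_apply]
    show W i j * (((hX.eigenvalues j : ℝ)) : ℂ) * star (W i j) = _
    push_cast
    rw [Complex.star_def, mul_right_comm, Complex.mul_conj]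
  rw [hentry]
  rw [Complex.re_sum]
  exact Finset.sum_congr rfl fun j _ => by rw [Complex.ofReal_re]

/-- The key inequality: for Hermitian `X` and unitary `V`,
`f (Re diag (V X V*)) ≤ f (eigenvalues X)`. -/
private lemma key_ineq {n : ℕ} (f : (Fin n → ℝ) → EReal)
    (hconv : ∀ (x y : Fin n → ℝ) (a b : ℝ), 0 ≤ a → 0 ≤ b → a + b = 1 →
      f (a • x + b • y) ≤ (a : EReal) * f x + (b : EReal) * f y)
    (hsym : ∀ (σ : Equiv.Perm (Fin n)) (x : Fin n → ℝ), f (x ∘ σ) = f x)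
    (X : Matrix (Fin n) (Fin n) ℂ) (hX : X.IsHermitian)
    (V : Matrix (Fin n) (Fin n) ℂ) (hV : V ∈ Matrix.unitaryGroup (Fin n) ℂ) :
    f (fun i => ((V * X * star V) i i).re) ≤ f hX.eigenvalues := by
  rw [diag_re_eq X hX V]
  exact schur_step f hconv hsym _ (mul_mem hV hX.eigenvectorUnitary.2) _

/-- equality when `V` diagonalizes `X`. -/
private lemma diag_re_eigen {n : ℕ} (X : Matrix (Fin n) (Fin n) ℂ) (hX : X.IsHermitian) :
    (fun i => (((star (hX.eigenvectorUnitary : Matrix (Fin n) (Fin n) ℂ)) * X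
        * star (star (hX.eigenvectorUnitary : Matrix (Fin n) (Fin n) ℂ))) i i).re)
      = hX.eigenvalues := by
  funext i
  have hdiag := hX.conjStarAlgAut_star_eigenvectorUnitary
  simp only [Unitary.conjStarAlgAut_apply, Unitary.coe_star, star_star] at hdiag
  rw [star_star, hdiag]
  simp

/-- if `f : ℝⁿ → ℝ ∪ {∞}` is a symmetric convex function, then the
function `F` on Hermitian matrices defined by `F X = f (eigenvalues of X)` is
convex (on the real vector space of Hermitian matrices) and unitarily invariant. -/
theorem spectral_convex_unitarily_invariant (n : ℕ)
    (f : (Fin n → ℝ) → EReal)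
    (hconv : ∀ (x y : Fin n → ℝ) (a b : ℝ), 0 ≤ a → 0 ≤ b → a + b = 1 →
      f (a • x + b • y) ≤ (a : EReal) * f x + (b : EReal) * f y)
    (hsym : ∀ (σ : Equiv.Perm (Fin n)) (x : Fin n → ℝ), f (x ∘ σ) = f x)
    (F : Matrix (Fin n) (Fin n) ℂ → EReal)
    (hF : ∀ (X : Matrix (Fin n) (Fin n) ℂ) (hX : X.IsHermitian),
      F X = f hX.eigenvalues) :
    (∀ (X Y : Matrix (Fin n) (Fin n) ℂ), X.IsHermitian → Y.IsHermitian →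
      ∀ (a b : ℝ), 0 ≤ a → 0 ≤ b → a + b = 1 →
        F (a • X + b • Y) ≤ (a : EReal) * F X + (b : EReal) * F Y) ∧
    (∀ (X : Matrix (Fin n) (Fin n) ℂ), X.IsHermitian →
      ∀ k ∈ Matrix.unitaryGroup (Fin n) ℂ, F (k * X * star k) = F X) := by
  constructor
  · intro X Y hX hY a b ha hb hab
    have hZ : (a • X + b • Y).IsHermitian := by
      unfold Matrix.IsHermitian
      rw [Matrix.conjTranspose_add, Matrix.conjTranspose_smul, Matrix.conjTranspose_smul,
        hX.eq, hY.eq, star_trivial, star_trivial]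
    set V : Matrix (Fin n) (Fin n) ℂ :=
      star (hZ.eigenvectorUnitary : Matrix (Fin n) (Fin n) ℂ) with hVdef
    have hV : V ∈ Matrix.unitaryGroup (Fin n) ℂ := Unitary.star_mem hZ.eigenvectorUnitary.2
    have h0 : F (a • X + b • Y) = f hZ.eigenvalues := hF _ hZ
    have h1 : hZ.eigenvalues = fun i => ((V * (a • X + b • Y) * star V) i i).re :=
      (diag_re_eigen _ hZ).symm
    have h2 : (fun i => ((V * (a • X + b • Y) * star V) i i).re)
        = a • (fun i => ((V * X * star V) i i).re) + b • (fun i => ((V * Y * star V) i i).re) := by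
      funext i
      have : V * (a • X + b • Y) * star V = a • (V * X * star V) + b • (V * Y * star V) := by
        rw [Matrix.mul_add, Matrix.add_mul, Matrix.mul_smul, Matrix.mul_smul,
          Matrix.smul_mul, Matrix.smul_mul]
      rw [this]
      simp [Complex.add_re, Complex.real_smul]
    rw [h0, h1, h2]
    have step := hconv (fun i => ((V * X * star V) i i).re) (fun i => ((V * Y * star V) i i).re) a b ha hb hab
    refine step.trans ?_
    have hfx := key_ineq f hconv hsym X hX V hV
    have hfy := key_ineq f hconv hsym Y hY V hV
    rw [hF X hX, hF Y hY]
    exact add_le_add (mul_le_mul_of_nonneg_left hfx (by exact_mod_cast ha))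
      (mul_le_mul_of_nonneg_left hfy (by exact_mod_cast hb))
  · intro X hX k hk
    have hY : (k * X * star k).IsHermitian := by
      unfold Matrix.IsHermitian
      rw [Matrix.conjTranspose_mul, Matrix.conjTranspose_mul]
      rw [Matrix.star_eq_conjTranspose] at *
      rw [Matrix.conjTranspose_conjTranspose, hX.eq, Matrix.mul_assoc]
    rw [hF _ hX, hF _ hY]
    apply le_antisymm
    · -- f (λ (kXk*)) ≤ f (λ X)
      set V : Matrix (Fin n) (Fin n) ℂ :=
        star (hY.eigenvectorUnitary : Matrix (Fin n) (Fin n) ℂ) with hVdef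
      have hV : V ∈ Matrix.unitaryGroup (Fin n) ℂ := Unitary.star_mem hY.eigenvectorUnitary.2
      have h1 : hY.eigenvalues = fun i => ((V * (k * X * star k) * star V) i i).re :=
        (diag_re_eigen _ hY).symm
      have h2 : V * (k * X * star k) * star V = (V * k) * X * star (V * k) := by
        rw [star_mul]
        simp only [Matrix.mul_assoc]
      rw [h1, h2]
      exact key_ineq f hconv hsym X hX (V * k) (mul_mem hV hk)
    · -- f (λ X) ≤ f (λ (kXk*))
      set V : Matrix (Fin n) (Fin n) ℂ :=
        star (hX.eigenvectorUnitary : Matrix (Fin n) (Fin n) ℂ) with hVdef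
      have hV : V ∈ Matrix.unitaryGroup (Fin n) ℂ := Unitary.star_mem hX.eigenvectorUnitary.2
      have h1 : hX.eigenvalues = fun i => ((V * X * star V) i i).re :=
        (diag_re_eigen _ hX).symm
      have hXeq : X = star k * (k * X * star k) * k := by
        have h2 : star k * k = 1 := Matrix.mem_unitaryGroup_iff'.mp hk
        rw [Matrix.mul_assoc, Matrix.mul_assoc, Matrix.mul_assoc, h2, Matrix.mul_one,
          ← Matrix.mul_assoc, h2, Matrix.one_mul]
      have h3 : V * X * star V = (V * star k) * (k * X * star k) * star (V * star k) := by
        conv_lhs => rw [hXeq]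
        simp only [star_mul, star_star, Matrix.mul_assoc]
      rw [h1, h3]
      exact key_ineq f hconv hsym _ hY (V * star k) (mul_mem hV (Unitary.star_mem hk))
end

section
/- For h ∈ ℝ^n, the n×n matrix S^h with entries S^h_{ij} = ((hᵢ - hⱼ)/2) / sinh((hᵢ - hⱼ)/2) (interpreted as 1 when hᵢ = hⱼ) is Hermitian positive semidefinite. -/
open MeasureTheory Real Set Filter Topology

/-- Auxiliary: Gram integral representation of the sinh-ratio kernel. -/
lemma sinh_ratio_integral (u v : ℝ) :
    IntegrableOn (fun t => (Real.exp (u/2) / (t + Real.exp u)) *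
        (Real.exp (v/2) / (t + Real.exp v))) (Set.Ioi 0) ∧
    (∫ t in Set.Ioi (0:ℝ), (Real.exp (u/2) / (t + Real.exp u)) *
        (Real.exp (v/2) / (t + Real.exp v))) =
      (if u = v then (1:ℝ) else ((u - v) / 2) / Real.sinh ((u - v) / 2)) := by
  by_cases huv : u = v
  · subst huv
    simp only [if_pos rfl]
    set c := Real.exp u with hc
    have hcpos : 0 < c := Real.exp_pos u
    have hderiv : ∀ x ∈ Set.Ici (0:ℝ), HasDerivAt (fun t => -(c / (t + c)))
        ((Real.exp (u/2) / (x + Real.exp u)) * (Real.exp (u/2) / (x + Real.exp u))) x := by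
      intro x hx
      have hx0 : (0:ℝ) ≤ x := hx
      have hxc : x + c ≠ 0 := by positivity
      have h1 : HasDerivAt (fun t : ℝ => t + c) 1 x := (hasDerivAt_id x).add_const c
      have h2 : HasDerivAt (fun t : ℝ => c / (t + c))
          ((0 * (x + c) - c * 1) / (x + c) ^ 2) x :=
        (hasDerivAt_const x c).div h1 hxc
      refine h2.neg.congr_deriv ?_
      symm
      rw [div_mul_div_comm, ← Real.exp_add]
      have h3 : u / 2 + u / 2 = u := by ring
      rw [h3, ← hc]
      field_simp
      ring
    have htend : Tendsto (fun t : ℝ => -(c / (t + c))) atTop (𝓝 (-0)) :=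
      (Tendsto.div_atTop tendsto_const_nhds
        (tendsto_atTop_add_const_right _ c tendsto_id)).neg
    rw [neg_zero] at htend
    have hpos : ∀ x ∈ Set.Ioi (0:ℝ), 0 ≤
        (Real.exp (u/2) / (x + Real.exp u)) * (Real.exp (u/2) / (x + Real.exp u)) := by
      intro x hx
      have hx0 : (0:ℝ) < x := hx
      positivity
    refine ⟨integrableOn_Ioi_deriv_of_nonneg' hderiv hpos htend, ?_⟩
    rw [integral_Ioi_of_hasDerivAt_of_nonneg' hderiv hpos htend]
    field_simp
    simp
  · simp only [if_neg huv]
    set A := Real.exp u with hA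
    set B := Real.exp v with hB
    have hApos : 0 < A := Real.exp_pos u
    have hBpos : 0 < B := Real.exp_pos v
    have hAB : A ≠ B := fun hh => huv (Real.exp_injective (by rw [← hA, ← hB, hh]))
    have hBA : B - A ≠ 0 := sub_ne_zero.mpr (Ne.symm hAB)
    set c := Real.exp ((u+v)/2) / (B - A) with hcdef
    have hderiv : ∀ x ∈ Set.Ici (0:ℝ), HasDerivAt
        (fun t => c * (Real.log (t + A) - Real.log (t + B)))
        ((Real.exp (u/2) / (x + A)) * (Real.exp (v/2) / (x + B))) x := by
      intro x hx
      have hx0 : (0:ℝ) ≤ x := hx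
      have hxA : x + A ≠ 0 := by positivity
      have hxB : x + B ≠ 0 := by positivity
      have h1 : HasDerivAt (fun t : ℝ => Real.log (t + A)) (1 / (x + A)) x := by
        simpa using (((hasDerivAt_id x).add_const A).log hxA)
      have h2 : HasDerivAt (fun t : ℝ => Real.log (t + B)) (1 / (x + B)) x := by
        simpa using (((hasDerivAt_id x).add_const B).log hxB)
      refine ((h1.sub h2).const_mul c).congr_deriv ?_
      symm
      rw [div_mul_div_comm, ← Real.exp_add]
      have h4 : u / 2 + v / 2 = (u + v) / 2 := by ring
      rw [h4, hcdef]
      field_simp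
      ring
    have hratio : Tendsto (fun t : ℝ => (t + A) / (t + B)) atTop (𝓝 1) := by
      have h0 : Tendsto (fun t : ℝ => (A - B) / (t + B)) atTop (𝓝 0) :=
        Tendsto.div_atTop tendsto_const_nhds (tendsto_atTop_add_const_right _ B tendsto_id)
      have h1 : Tendsto (fun t : ℝ => 1 + (A - B) / (t + B)) atTop (𝓝 (1 + 0)) :=
        tendsto_const_nhds.add h0
      rw [add_zero] at h1
      refine h1.congr' ?_
      filter_upwards [eventually_gt_atTop (0:ℝ)] with t ht
      have htB : t + B ≠ 0 := by positivity
      field_simp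
      ring
    have htend : Tendsto (fun t : ℝ => c * (Real.log (t + A) - Real.log (t + B)))
        atTop (𝓝 (c * 0)) := by
      refine Tendsto.const_mul c ?_
      have hlog : Tendsto (fun t : ℝ => Real.log ((t + A) / (t + B))) atTop (𝓝 0) := by
        have := (Real.continuousAt_log one_ne_zero).tendsto.comp hratio
        simpa [Function.comp_def] using this
      refine hlog.congr' ?_
      filter_upwards [eventually_gt_atTop (0:ℝ)] with t ht
      rw [Real.log_div (by positivity) (by positivity)]
    rw [mul_zero] at htend
    have hpos : ∀ x ∈ Set.Ioi (0:ℝ), 0 ≤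
        (Real.exp (u/2) / (x + A)) * (Real.exp (v/2) / (x + B)) := by
      intro x hx
      have hx0 : (0:ℝ) < x := hx
      positivity
    refine ⟨integrableOn_Ioi_deriv_of_nonneg' hderiv hpos htend, ?_⟩
    rw [integral_Ioi_of_hasDerivAt_of_nonneg' hderiv hpos htend]
    have hlogA : Real.log (0 + A) = u := by rw [zero_add, hA, Real.log_exp]
    have hlogB : Real.log (0 + B) = v := by rw [zero_add, hB, Real.log_exp]
    rw [hlogA, hlogB, hcdef]
    have hsinh : Real.sinh ((u - v) / 2) = (B - A) / (-2 * Real.exp ((u + v)/2)) := by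
      rw [Real.sinh_eq, hA, hB]
      rw [show -((u-v)/2) = v/2 - u/2 by ring, show (u-v)/2 = u/2 - v/2 by ring]
      rw [Real.exp_sub, Real.exp_sub]
      have hu2 : Real.exp u = Real.exp (u/2) * Real.exp (u/2) := by
        rw [← Real.exp_add]; ring_nf
      have hv2 : Real.exp v = Real.exp (v/2) * Real.exp (v/2) := by
        rw [← Real.exp_add]; ring_nf
      have huv2 : Real.exp ((u+v)/2) = Real.exp (u/2) * Real.exp (v/2) := by
        rw [← Real.exp_add]; ring_nf
      rw [hu2, hv2, huv2]
      field_simp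
      ring
    rw [hsinh]
    have hsne : (B - A) / (-2 * Real.exp ((u + v)/2)) ≠ 0 := by
      apply div_ne_zero hBA
      have := Real.exp_pos ((u+v)/2)
      intro hcon; nlinarith
    field_simp
    ring

/-- for `h ∈ ℝⁿ`, the matrix with entries
`((hᵢ - hⱼ)/2) / sinh ((hᵢ - hⱼ)/2)` (equal to `1` when `hᵢ = hⱼ`) is
(Hermitian) positive semidefinite. -/
theorem posSemidef_sinh_ratio_matrix (n : ℕ) (h : Fin n → ℝ) :
    Matrix.PosSemidef (Matrix.of fun i j : Fin n =>
      if h i = h j then (1 : ℝ)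
      else ((h i - h j) / 2) / Real.sinh ((h i - h j) / 2)) := by
  set g : Fin n → ℝ → ℝ := fun i t => Real.exp (h i / 2) / (t + Real.exp (h i)) with hg
  have hint : ∀ i j, IntegrableOn (fun t => g i t * g j t) (Set.Ioi 0) :=
    fun i j => (sinh_ratio_integral (h i) (h j)).1
  have hval : ∀ i j : Fin n,
      (if h i = h j then (1:ℝ) else ((h i - h j) / 2) / Real.sinh ((h i - h j) / 2)) =
        ∫ t in Set.Ioi (0:ℝ), g i t * g j t :=
    fun i j => ((sinh_ratio_integral (h i) (h j)).2).symm
  rw [Matrix.posSemidef_iff_dotProduct_mulVec]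
  constructor
  · ext i j
    simp only [Matrix.conjTranspose_apply, Matrix.of_apply, star_trivial]
    rw [hval j i, hval i j]
    congr 1; ext t; ring
  · intro x
    simp only [star_trivial, Matrix.mulVec, dotProduct, Matrix.of_apply]
    have step1 : ∀ i j : Fin n,
        x i * ((if h i = h j then (1:ℝ)
          else ((h i - h j) / 2) / Real.sinh ((h i - h j) / 2)) * x j) =
        ∫ t in Set.Ioi (0:ℝ), (x i * x j) * (g i t * g j t) := by
      intro i j
      rw [hval i j, MeasureTheory.integral_const_mul]
      ring
    calc (∑ i, x i * ∑ j, (if h i = h j then (1:ℝ)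
          else ((h i - h j) / 2) / Real.sinh ((h i - h j) / 2)) * x j)
        = ∑ i, ∑ j, x i * ((if h i = h j then (1:ℝ)
          else ((h i - h j) / 2) / Real.sinh ((h i - h j) / 2)) * x j) := by
          simp [Finset.mul_sum]
      _ = ∑ i, ∑ j, ∫ t in Set.Ioi (0:ℝ), (x i * x j) * (g i t * g j t) := by
          simp only [step1]
      _ = ∫ t in Set.Ioi (0:ℝ), ∑ i, ∑ j, (x i * x j) * (g i t * g j t) := by
          rw [MeasureTheory.integral_finset_sum]
          · refine Finset.sum_congr rfl fun i _ => ?_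
            rw [MeasureTheory.integral_finset_sum]
            intro j _
            exact (hint i j).const_mul (x i * x j)
          · intro i _
            exact MeasureTheory.integrable_finset_sum _ fun j _ =>
              (hint i j).const_mul (x i * x j)
      _ = ∫ t in Set.Ioi (0:ℝ), (∑ i, x i * g i t) ^ 2 := by
          congr 1
          funext t
          rw [sq, Finset.sum_mul_sum]
          exact Finset.sum_congr rfl fun i _ => Finset.sum_congr rfl fun j _ => by ring
      _ ≥ 0 := MeasureTheory.integral_nonneg fun t => sq_nonneg _
end

section
/- Let Ψ be a doubly stochastic linear operator on n×n complex matrices (positive, unital, and with unital adjoint), and suppose A, B ∈ H_n satisfy A = Ψ(B). Then there exist unitaries k₁,...,k_m and positive reals p₁,...,p_m with Σⱼ pⱼ = 1 such that A = Σⱼ pⱼ kⱼ† B kⱼ. -/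
open Matrix
open scoped ComplexOrder

private lemma aux_diagonal_eq_sum {n : ℕ} (d : Fin n → ℂ) :
    diagonal d = ∑ j, d j • single j j (1 : ℂ) := by
  ext i l
  simp only [Matrix.sum_apply, Matrix.smul_apply, Matrix.single, Matrix.of_apply,
    smul_ite, smul_zero, smul_eq_mul, mul_one]
  rcases eq_or_ne i l with h | h
  · subst h
    simp [Matrix.diagonal_apply_eq, Finset.sum_ite_eq', and_self]
  · rw [Matrix.diagonal_apply_ne _ h]
    refine (Finset.sum_eq_zero fun j _ => ?_).symm
    have hc : ¬(j = i ∧ j = l) := by rintro ⟨rfl, rfl⟩; exact h rfl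
    simp [hc]

private lemma aux_perm_star {n : ℕ} (σ : Equiv.Perm (Fin n)) :
    star (σ.permMatrix ℂ) = (σ⁻¹).permMatrix ℂ := by
  have ht : (σ.permMatrix ℂ)ᵀ = (σ⁻¹).permMatrix ℂ := by
    rw [Equiv.Perm.permMatrix, ← PEquiv.toMatrix_symm, ← Equiv.toPEquiv_symm]
    rfl
  rw [Matrix.star_eq_conjTranspose, ← ht]
  ext i j
  simp [Matrix.conjTranspose_apply, Equiv.Perm.permMatrix, PEquiv.toMatrix_apply,
    Equiv.toPEquiv_apply, apply_ite]

private lemma aux_perm_unitary {n : ℕ} (σ : Equiv.Perm (Fin n)) :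
    (σ.permMatrix ℂ) ∈ Matrix.unitaryGroup (Fin n) ℂ := by
  rw [Matrix.mem_unitaryGroup_iff']
  rw [aux_perm_star, Equiv.Perm.permMatrix, PEquiv.toMatrix_toPEquiv_mul]
  ext i j
  simp [Matrix.one_apply, Equiv.Perm.permMatrix, PEquiv.toMatrix_apply, Equiv.toPEquiv_apply,
    Equiv.eq_symm_apply]

private lemma aux_perm_conj {n : ℕ} (σ : Equiv.Perm (Fin n)) (d : Fin n → ℂ) :
    star (σ.permMatrix ℂ) * diagonal d * σ.permMatrix ℂ = diagonal (fun i => d (σ⁻¹ i)) := by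
  rw [aux_perm_star, Equiv.Perm.permMatrix, Equiv.Perm.permMatrix,
    PEquiv.toMatrix_toPEquiv_mul, PEquiv.mul_toMatrix_toPEquiv,
    Matrix.submatrix_submatrix]
  ext i j
  simp [Matrix.submatrix_apply, Matrix.diagonal_apply, Equiv.Perm.inv_def,
    EmbeddingLike.apply_eq_iff_eq]

private lemma aux_psd_diag {n : ℕ} {M : Matrix (Fin n) (Fin n) ℂ} (hM : M.PosSemidef)
    (i : Fin n) : 0 ≤ (M i i).re ∧ (M i i).im = 0 := by
  have h := hM.diag_nonneg (i := i)
  exact ⟨(Complex.le_def.mp h).1, ((Complex.le_def.mp h).2).symm⟩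

/-- if `Ψ` is a doubly stochastic linear operator on `n × n`
complex matrices (positive, unital, adjoint unital) and `A = Ψ B` with `A, B`
Hermitian, then `A` is a convex combination of unitary conjugates of `B`
with positive weights. -/

theorem doubly_stochastic_image_convex_combination (n : ℕ)
    (Ψ : Matrix (Fin n) (Fin n) ℂ →ₗ[ℂ] Matrix (Fin n) (Fin n) ℂ)
    (hpos : ∀ X : Matrix (Fin n) (Fin n) ℂ, X.PosSemidef → (Ψ X).PosSemidef)
    (hunital : Ψ 1 = 1)
    (hadj : ∀ X : Matrix (Fin n) (Fin n) ℂ, ((Ψ X)ᴴ).trace = (Xᴴ).trace)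
    (A B : Matrix (Fin n) (Fin n) ℂ)
    (hA : A.IsHermitian) (hB : B.IsHermitian) (hAB : A = Ψ B) :
    ∃ (m : ℕ) (k : Fin m → Matrix.unitaryGroup (Fin n) ℂ) (p : Fin m → ℝ),
      (∀ j, 0 < p j) ∧ (∑ j, p j) = 1 ∧
      A = ∑ j, p j • (star (k j : Matrix (Fin n) (Fin n) ℂ) * B * (k j)) := by
  classical
  set U : Matrix (Fin n) (Fin n) ℂ := ↑hA.eigenvectorUnitary with hUdef
  set V : Matrix (Fin n) (Fin n) ℂ := ↑hB.eigenvectorUnitary with hVdef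
  have hUmem : U ∈ Matrix.unitaryGroup (Fin n) ℂ := hA.eigenvectorUnitary.2
  have hVmem : V ∈ Matrix.unitaryGroup (Fin n) ℂ := hB.eigenvectorUnitary.2
  have hUU : star U * U = 1 := Matrix.mem_unitaryGroup_iff'.mp hUmem
  have hUU' : U * star U = 1 := Matrix.mem_unitaryGroup_iff.mp hUmem
  have hVV : star V * V = 1 := Matrix.mem_unitaryGroup_iff'.mp hVmem
  have hVV' : V * star V = 1 := Matrix.mem_unitaryGroup_iff.mp hVmem
  set a : Fin n → ℝ := hA.eigenvalues with hadef
  set b : Fin n → ℝ := hB.eigenvalues with hbdef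
  set Ej : Fin n → Matrix (Fin n) (Fin n) ℂ := fun j => single j j 1 with hEdef
  set Mj : Fin n → Matrix (Fin n) (Fin n) ℂ := fun j => V * Ej j * star V with hMdef
  set C : Fin n → Matrix (Fin n) (Fin n) ℂ := fun j => star U * Ψ (Mj j) * U with hCdef
  set D : Matrix (Fin n) (Fin n) ℝ := Matrix.of (fun i j => ((C j) i i).re) with hDdef
  -- E_j is PSD
  have hEpsd : ∀ j, (Ej j).PosSemidef := by
    intro j
    have hE : Ej j = diagonal (Pi.single j 1) := by
      ext i l
      rcases eq_or_ne i l with rfl | h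
      · simp [hEdef, Matrix.single, Matrix.diagonal_apply_eq, Pi.single_apply,
          eq_comm, and_self]
      · have hc : ¬(j = i ∧ j = l) := by rintro ⟨rfl, rfl⟩; exact h rfl
        simp [hEdef, Matrix.single, Matrix.diagonal_apply_ne _ h, hc]
    rw [hE]
    refine Matrix.PosSemidef.diagonal ?_
    intro i
    rcases eq_or_ne j i with rfl | h
    · simp
    · simp [Pi.single_apply, h.symm]
  have hMpsd : ∀ j, (Mj j).PosSemidef := by
    intro j
    have := (hEpsd j).mul_mul_conjTranspose_same V
    rwa [← Matrix.star_eq_conjTranspose] at this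
  have hCpsd : ∀ j, (C j).PosSemidef := by
    intro j
    have := (hpos _ (hMpsd j)).conjTranspose_mul_mul_same U
    rwa [← Matrix.star_eq_conjTranspose] at this
  -- sums
  have hsumE : ∑ j, Ej j = 1 := by
    have h1 := aux_diagonal_eq_sum (fun _ : Fin n => (1 : ℂ))
    simp only [one_smul] at h1
    rw [← h1, Matrix.diagonal_one]
  have hsumM : ∑ j, Mj j = 1 := by
    simp only [hMdef]
    rw [← Finset.sum_mul, ← Finset.mul_sum, hsumE, mul_one, hVV']
  have hsumC : ∑ j, C j = 1 := by
    simp only [hCdef]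
    rw [← Finset.sum_mul, ← Finset.mul_sum, ← map_sum, hsumM, hunital, mul_one, hUU]
  -- D is doubly stochastic
  have hrow : ∀ i, ∑ j, D i j = 1 := by
    intro i
    have h1 : ∑ j, ((C j) i i).re = (((∑ j, C j) : Matrix (Fin n) (Fin n) ℂ) i i).re := by
      rw [Matrix.sum_apply]
      exact (Complex.re_sum _ _).symm
    simp only [hDdef, Matrix.of_apply]
    rw [h1, hsumC]
    simp [Matrix.one_apply]
  have htrC : ∀ j, (C j).trace = 1 := by
    intro j
    have h1 : (C j).trace = (Ψ (Mj j)).trace := by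
      rw [hCdef, Matrix.trace_mul_cycle, hUU', one_mul]
    have h2 : (Ψ (Mj j)).trace = (Mj j).trace := by
      have h := hadj (Mj j)
      rw [Matrix.trace_conjTranspose, Matrix.trace_conjTranspose] at h
      exact star_injective h
    have h3 : (Mj j).trace = 1 := by
      rw [hMdef, Matrix.trace_mul_cycle, hVV, one_mul,
        Matrix.trace_single_eq_same]
    rw [h1, h2, h3]
  have hcol : ∀ j, ∑ i, D i j = 1 := by
    intro j
    have h1 : ∑ i, ((C j) i i).re = ((C j).trace).re := by
      rw [Matrix.trace]
      exact (Complex.re_sum _ _).symm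
    simp only [hDdef, Matrix.of_apply]
    rw [h1, htrC]
    simp
  have hDmem : D ∈ doublyStochastic ℝ (Fin n) := by
    rw [mem_doublyStochastic_iff_sum]
    exact ⟨fun i j => (aux_psd_diag (hCpsd j) i).1, hrow, hcol⟩
  -- eigenvalue relation
  have hBdec : B = ∑ j, (b j : ℂ) • Mj j := by
    conv_lhs => rw [hB.spectral_theorem, Unitary.conjStarAlgAut_apply]
    have hd : diagonal (RCLike.ofReal ∘ b) = ∑ j, (b j : ℂ) • Ej j := by
      exact aux_diagonal_eq_sum (fun j => (b j : ℂ))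
    rw [hd, Finset.mul_sum, Finset.sum_mul]
    refine Finset.sum_congr rfl fun j _ => ?_
    simp [hMdef, hVdef, Unitary.coe_star, mul_smul_comm, smul_mul_assoc]
  have hdiagA : diagonal (fun i => (a i : ℂ)) = ∑ j, (b j : ℂ) • C j := by
    have hsd := hA.conjStarAlgAut_star_eigenvectorUnitary
    have : diagonal (fun i => (a i : ℂ)) = star U * A * U := by
      rw [show diagonal (fun i => (a i : ℂ)) = diagonal (RCLike.ofReal ∘ hA.eigenvalues) from rfl,
        ← hsd]; simp [hUdef]
    rw [this, hAB, hBdec, map_sum]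
    simp only [_root_.map_smul]
    rw [Finset.mul_sum, Finset.sum_mul]
    refine Finset.sum_congr rfl fun j _ => ?_
    simp [hCdef, mul_smul_comm, smul_mul_assoc]
  have haD : ∀ i, a i = ∑ j, D i j * b j := by
    intro i
    have h := congrArg (fun M : Matrix (Fin n) (Fin n) ℂ => (M i i).re) hdiagA
    simp only [Matrix.diagonal_apply_eq, Matrix.sum_apply, Matrix.smul_apply,
      smul_eq_mul, Complex.ofReal_re] at h
    rw [h, Complex.re_sum]
    refine Finset.sum_congr rfl fun j _ => ?_
    rw [Complex.re_ofReal_mul, mul_comm]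
    rfl
  -- Birkhoff
  obtain ⟨w, hw0, hw1, hwD⟩ := exists_eq_sum_perm_of_mem_doublyStochastic hDmem
  have hDw : ∀ i j, D i j = ∑ σ : Equiv.Perm (Fin n), w σ * (if σ i = j then 1 else 0) := by
    intro i j
    rw [← hwD]
    simp [Matrix.sum_apply, Equiv.Perm.permMatrix, PEquiv.toMatrix_apply,
      Equiv.toPEquiv_apply, mul_ite]
  have ha2 : ∀ i, a i = ∑ σ : Equiv.Perm (Fin n), w σ * b (σ i) := by
    intro i
    rw [haD i]
    simp only [hDw, Finset.sum_mul]
    rw [Finset.sum_comm]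
    refine Finset.sum_congr rfl fun σ _ => ?_
    simp [ite_mul, mul_assoc, Finset.sum_ite_eq]
  -- final assembly
  set k0 : Equiv.Perm (Fin n) → Matrix (Fin n) (Fin n) ℂ :=
    fun σ => V * (σ⁻¹).permMatrix ℂ * star U with hk0
  have hkmem : ∀ σ, k0 σ ∈ Matrix.unitaryGroup (Fin n) ℂ := fun σ =>
    mul_mem (mul_mem hVmem (aux_perm_unitary _)) (Unitary.star_mem hUmem)
  have hconj : ∀ σ : Equiv.Perm (Fin n),
      star (k0 σ) * B * (k0 σ) = U * diagonal (fun i => (b (σ i) : ℂ)) * star U := by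
    intro σ
    have hsb : star V * B * V = diagonal (fun i => (b i : ℂ)) := by
      rw [show diagonal (fun i => (b i : ℂ)) = diagonal (RCLike.ofReal ∘ hB.eigenvalues) from rfl,
        ← hB.conjStarAlgAut_star_eigenvectorUnitary]; simp [hVdef]
    have hpc := aux_perm_conj (σ⁻¹) (fun i => (b i : ℂ))
    have hexp : star (k0 σ) * B * (k0 σ) =
        U * (star ((σ⁻¹).permMatrix ℂ) * (star V * B * V) * (σ⁻¹).permMatrix ℂ) * star U := by
      simp only [hk0, StarMul.star_mul, star_star, mul_assoc]
    rw [hexp, hsb, hpc]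
    simp
  have hdiagsum : diagonal (fun i => (a i : ℂ)) =
      ∑ σ : Equiv.Perm (Fin n), w σ • diagonal (fun i => (b (σ i) : ℂ)) := by
    ext i l
    rcases eq_or_ne i l with rfl | h
    · simp only [Matrix.diagonal_apply_eq, Matrix.sum_apply, Matrix.smul_apply]
      rw [ha2 i]
      push_cast
      refine Finset.sum_congr rfl fun σ _ => ?_
      simp [Matrix.diagonal_apply_eq, Complex.real_smul]
    · simp [Matrix.diagonal_apply_ne _ h, Matrix.sum_apply]
  have hAfin : A = ∑ σ : Equiv.Perm (Fin n), w σ • (star (k0 σ) * B * k0 σ) := by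
    conv_lhs => rw [hA.spectral_theorem, Unitary.conjStarAlgAut_apply]
    have hre : diagonal (RCLike.ofReal ∘ a) = diagonal (fun i => (a i : ℂ)) := rfl
    rw [hre, hdiagsum, Finset.mul_sum, Finset.sum_mul]
    refine Finset.sum_congr rfl fun σ _ => ?_
    rw [hconj σ]
    simp [hUdef, Unitary.coe_star, mul_smul_comm, smul_mul_assoc]
  set S : Finset (Equiv.Perm (Fin n)) := Finset.univ.filter (fun σ => 0 < w σ) with hS
  have hzero : ∀ σ, σ ∉ S → w σ = 0 := by
    intro σ hσ
    simp only [hS, Finset.mem_filter, Finset.mem_univ, true_and, not_lt] at hσ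
    exact le_antisymm hσ (hw0 σ)
  have hsumS : ∑ σ ∈ S, w σ = 1 := by
    rw [← hw1]
    exact Finset.sum_subset (Finset.subset_univ S) (fun x _ hx => hzero x hx)
  have hASfin : A = ∑ σ ∈ S, w σ • (star (k0 σ) * B * k0 σ) := by
    rw [hAfin]
    exact (Finset.sum_subset (Finset.subset_univ S)
      (fun x _ hx => by rw [hzero x hx, zero_smul])).symm
  refine ⟨S.card, fun j => ⟨k0 (S.equivFin.symm j), hkmem _⟩,
    fun j => w (S.equivFin.symm j), fun j => ?_, ?_, ?_⟩
  · have hmem := (S.equivFin.symm j).2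
    simp only [hS, Finset.mem_filter, Finset.mem_univ, true_and] at hmem
    exact hmem
  · rw [← hsumS, ← Finset.sum_coe_sort S (fun σ => w σ)]
    exact Equiv.sum_comp S.equivFin.symm (fun x : ↥S => w ↑x)
  · rw [hASfin, ← Finset.sum_coe_sort S (fun σ => w σ • (star (k0 σ) * B * k0 σ))]
    exact (Equiv.sum_comp S.equivFin.symm
      (fun x : ↥S => w ↑x • (star (k0 ↑x) * B * k0 ↑x))).symm
end

section
/- Let x(t) = e^{H(t)} be a smooth curve in the positive definite matrices with H(t) Hermitian, and write H(s) = k diag(h) k† with k unitary, h ∈ ℝ^n. Then Ḣ(s) = k (S^h ⊙ (k† (x(s)^{-1/2} ẋ(s) x(s)^{-1/2}) k)) k†, where S^h_{ij} = ((hᵢ-hⱼ)/2)/sinh((hᵢ-hⱼ)/2) and ⊙ is the Hadamard product. -/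
open Matrix NormedSpace
open scoped BigOperators


section linfty
attribute [local instance] Matrix.linftyOpNormedRing Matrix.linftyOpNormedAlgebra

noncomputable def entryCLM (n : ℕ) (i j : Fin n) :
    Matrix (Fin n) (Fin n) ℂ →L[ℂ] ℂ :=
  LinearMap.toContinuousLinearMap
    { toFun := fun A => A i j
      map_add' := fun _ _ => rfl
      map_smul' := fun _ _ => rfl }

theorem hasDerivAt_entrywise {n : ℕ} {f : ℝ → Matrix (Fin n) (Fin n) ℂ}
    {f' : Matrix (Fin n) (Fin n) ℂ} {s : ℝ} :
    HasDerivAt f f' s ↔ ∀ i j, HasDerivAt (fun t => f t i j) (f' i j) s := by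
  have key : ∀ A : Matrix (Fin n) (Fin n) ℂ,
      A = ∑ i, ∑ j, (A i j) • Matrix.single i j (1 : ℂ) := by
    intro A
    conv_lhs => rw [Matrix.matrix_eq_sum_single A]
    refine Finset.sum_congr rfl fun i _ => Finset.sum_congr rfl fun j _ => ?_
    rw [Matrix.smul_single, smul_eq_mul, mul_one]
  constructor
  · intro hf i j
    have := ((entryCLM n i j).hasFDerivAt.restrictScalars ℝ).comp_hasDerivAt s hf
    exact this
  · intro hf
    have : HasDerivAt (fun t => ∑ i, ∑ j, (f t i j) • Matrix.single i j (1 : ℂ))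
        (∑ i, ∑ j, (f' i j) • Matrix.single i j (1 : ℂ)) s := by
      apply HasDerivAt.fun_sum; intro i _; apply HasDerivAt.fun_sum; intro j _
      exact (hf i j).smul_const _
    rw [key f']
    exact this.congr_of_eventuallyEq (Filter.Eventually.of_forall fun t => (key (f t)))
end linfty

section linfty
attribute [local instance] Matrix.linftyOpNormedRing Matrix.linftyOpNormedAlgebra

variable {n : ℕ}
local notation "M" => Matrix (Fin n) (Fin n) ℂ

theorem hasDerivAt_pow_curve {f : ℝ → M} {v : M} {t : ℝ} (hf : HasDerivAt f v t) :
    ∀ m : ℕ, HasDerivAt (fun t => f t ^ m)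
      (∑ j ∈ Finset.range m, f t ^ j * v * f t ^ (m - 1 - j)) t := by
  intro m
  induction m with
  | zero => simp only [pow_zero, Finset.range_zero, Finset.sum_empty]; exact hasDerivAt_const t (1 : M)
  | succ m ih =>
    have h := ih.mul hf
    have : (∑ j ∈ Finset.range (m+1), f t ^ j * v * f t ^ (m - j))
        = (∑ j ∈ Finset.range m, f t ^ j * v * f t ^ (m - 1 - j)) * f t + f t ^ m * v := by
      rw [Finset.sum_range_succ, Finset.sum_mul]
      congr 1
      · refine Finset.sum_congr rfl fun j hj => ?_
        have hj' : j < m := Finset.mem_range.1 hj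
        have : m - j = (m - 1 - j) + 1 := by omega
        rw [this, pow_succ, ← mul_assoc, mul_assoc (f t ^ j * v)]
      · simp
    simp only [pow_succ]
    have goal_eq : ∀ j ∈ Finset.range (m+1), f t ^ j * v * f t ^ (m + 1 - 1 - j)
        = f t ^ j * v * f t ^ (m - j) := by
      intro j hj; congr 2
    rw [Finset.sum_congr rfl goal_eq, this]
    exact h

theorem norm_pow_mul_le (X Y : M) : ∀ l : ℕ, ‖X ^ l * Y‖ ≤ ‖X‖ ^ l * ‖Y‖ := by
  intro l
  induction l with
  | zero => simp
  | succ l ih =>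
    calc ‖X ^ (l+1) * Y‖ = ‖X * (X ^ l * Y)‖ := by rw [pow_succ']; rw [mul_assoc]
    _ ≤ ‖X‖ * ‖X ^ l * Y‖ := norm_mul_le _ _
    _ ≤ ‖X‖ * (‖X‖ ^ l * ‖Y‖) := by
        exact mul_le_mul_of_nonneg_left ih (norm_nonneg X)
    _ = ‖X‖ ^ (l+1) * ‖Y‖ := by ring

theorem norm_mul_pow_le (X Y : M) : ∀ l : ℕ, ‖Y * X ^ l‖ ≤ ‖Y‖ * ‖X‖ ^ l := by
  intro l
  induction l with
  | zero => simp
  | succ l ih =>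
    calc ‖Y * X ^ (l+1)‖ = ‖Y * X ^ l * X‖ := by rw [pow_succ, mul_assoc]
    _ ≤ ‖Y * X ^ l‖ * ‖X‖ := norm_mul_le _ _
    _ ≤ ‖Y‖ * ‖X‖ ^ l * ‖X‖ := mul_le_mul_of_nonneg_right ih (norm_nonneg X)
    _ = ‖Y‖ * ‖X‖ ^ (l+1) := by ring

end linfty

section linfty2
attribute [local instance] Matrix.linftyOpNormedRing Matrix.linftyOpNormedAlgebra

variable {n : ℕ}

theorem exp_line_deriv (A V : Matrix (Fin n) (Fin n) ℂ) :
    HasDerivAt (fun t : ℝ => NormedSpace.exp (A + t • V))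
      (∑' m : ℕ, (m.factorial : ℂ)⁻¹ •
        ∑ j ∈ Finset.range m, A ^ j * V * A ^ (m - 1 - j)) 0 := by
  classical
  set R : ℝ := ‖A‖ + ‖V‖ with hR
  have hR0 : 0 ≤ R := by positivity
  set u : ℕ → ℝ := fun m => (m.factorial : ℝ)⁻¹ * (m * (R ^ (m - 1) * ‖V‖)) with hu
  have hus : Summable u := by
    rw [← summable_nat_add_iff 1]
    have : (fun m => u (m + 1)) = fun m => (R ^ m / m.factorial) * ‖V‖ := by
      funext m
      have h1 : ((m+1).factorial : ℝ) = (m+1) * m.factorial := by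
        push_cast [Nat.factorial_succ]; ring
      have hf : (m.factorial : ℝ) ≠ 0 := Nat.cast_ne_zero.2 m.factorial_ne_zero
      have hm1 : ((m:ℝ)+1) ≠ 0 := by positivity
      simp only [hu, h1]
      push_cast
      field_simp
    rw [this]
    exact (Real.summable_pow_div_factorial R).mul_right _
  set g : ℕ → ℝ → Matrix (Fin n) (Fin n) ℂ :=
    fun m t => (m.factorial : ℂ)⁻¹ • (A + t • V) ^ m with hg
  set g' : ℕ → ℝ → Matrix (Fin n) (Fin n) ℂ := fun m t => (m.factorial : ℂ)⁻¹ •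
    ∑ j ∈ Finset.range m, (A + t • V) ^ j * V * (A + t • V) ^ (m - 1 - j) with hg'
  have hline : ∀ t : ℝ, HasDerivAt (fun t : ℝ => A + t • V) V t := by
    intro t
    have := ((hasDerivAt_id t).smul_const V).const_add A; rw [one_smul] at this; exact this
  have hgd : ∀ m (t : ℝ), HasDerivAt (g m) (g' m t) t := fun m t =>
    (hasDerivAt_pow_curve (hline t) m).const_smul ((m.factorial : ℂ)⁻¹)
  have hbound : ∀ m (t : ℝ), t ∈ Metric.ball (0:ℝ) 1 → ‖g' m t‖ ≤ u m := by
    intro m t ht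
    have hC : ‖A + t • V‖ ≤ R := by
      refine (norm_add_le _ _).trans ?_
      have : ‖t • V‖ ≤ ‖V‖ := by
        rw [norm_smul]
        have : |t| ≤ 1 := le_of_lt (by simpa [abs_sub_comm] using Metric.mem_ball.1 ht)
        calc ‖t‖ * ‖V‖ ≤ 1 * ‖V‖ :=
          mul_le_mul_of_nonneg_right (by simpa using this) (norm_nonneg V)
        _ = ‖V‖ := one_mul _
      linarith
    have hterm : ∀ j ∈ Finset.range m,
        ‖(A + t • V) ^ j * V * (A + t • V) ^ (m - 1 - j)‖ ≤ R ^ (m-1) * ‖V‖ := by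
      intro j hj
      have hj' : j < m := Finset.mem_range.1 hj
      set C := A + t • V
      calc ‖C ^ j * V * C ^ (m-1-j)‖ ≤ ‖C ^ j * V‖ * ‖C‖ ^ (m-1-j) :=
            norm_mul_pow_le C (C ^ j * V) (m-1-j)
      _ ≤ (‖C‖ ^ j * ‖V‖) * ‖C‖ ^ (m-1-j) :=
            mul_le_mul_of_nonneg_right (norm_pow_mul_le C V j) (by positivity)
      _ ≤ (R ^ j * ‖V‖) * R ^ (m-1-j) := by
            have hCn : 0 ≤ ‖C‖ := norm_nonneg _
            gcongr
      _ = R ^ (j + (m-1-j)) * ‖V‖ := by rw [pow_add]; ring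
      _ = R ^ (m-1) * ‖V‖ := by congr 2; omega
    calc ‖g' m t‖ = (m.factorial : ℝ)⁻¹ *
          ‖∑ j ∈ Finset.range m, (A + t • V) ^ j * V * (A + t • V) ^ (m - 1 - j)‖ := by
          rw [hg', norm_smul]
          congr 1
          simp [Complex.norm_natCast]
    _ ≤ (m.factorial : ℝ)⁻¹ * ∑ j ∈ Finset.range m, ‖(A + t • V) ^ j * V * (A + t • V) ^ (m-1-j)‖ := by
          gcongr
          exact norm_sum_le _ _
    _ ≤ (m.factorial : ℝ)⁻¹ * ∑ j ∈ Finset.range m, R ^ (m-1) * ‖V‖ :=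
          mul_le_mul_of_nonneg_left (Finset.sum_le_sum hterm) (by positivity)
    _ = u m := by
          rw [Finset.sum_const, Finset.card_range, nsmul_eq_mul, hu]
    _ ≤ u m := le_refl _
  have hsum0 : Summable fun m => g m 0 := by
    have : (fun m => g m 0) = fun m => (m.factorial : ℂ)⁻¹ • A ^ m := by
      funext m; simp [hg]
    rw [this]
    exact expSeries_summable' (𝕂 := ℂ) A
  have := hasDerivAt_tsum_of_isPreconnected hus Metric.isOpen_ball
    ((convex_ball (0:ℝ) 1).isPreconnected) (fun m y _ => hgd m y) hbound
    (Metric.mem_ball_self one_pos) hsum0 (Metric.mem_ball_self one_pos)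
  have heq : (fun z : ℝ => ∑' m, g m z) = fun z : ℝ => NormedSpace.exp (A + z • V) := by
    funext z
    rw [exp_eq_tsum ℂ]
  replace this := this.congr_of_eventuallyEq (Filter.Eventually.of_forall fun z => (congrFun heq z).symm)
  refine this.congr_deriv ?_
  simp only [hg', zero_smul, add_zero]
  rfl
end linfty2

section linfty3
attribute [local instance] Matrix.linftyOpNormedRing Matrix.linftyOpNormedAlgebra
variable {n : ℕ}

theorem dx_eq_tsum (H : ℝ → Matrix (Fin n) (Fin n) ℂ) (s : ℝ)
    (dH dx : Matrix (Fin n) (Fin n) ℂ)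
    (hdH : HasDerivAt H dH s)
    (hdx : HasDerivAt (fun t => NormedSpace.exp (H t)) dx s) :
    dx = ∑' m : ℕ, (m.factorial : ℂ)⁻¹ •
      ∑ j ∈ Finset.range m, (H s) ^ j * dH * (H s) ^ (m - 1 - j) := by
  set A := H s with hA
  have hL : HasFDerivAt (NormedSpace.exp) (fderiv ℂ (NormedSpace.exp) A) A :=
    (exp_analytic A).differentiableAt.hasFDerivAt
  have hLR := hL.restrictScalars ℝ
  have h1 : HasDerivAt (fun t => NormedSpace.exp (H t)) ((fderiv ℂ (NormedSpace.exp) A) dH) s :=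
    hLR.comp_hasDerivAt s hdH
  have h2 : dx = (fderiv ℂ (NormedSpace.exp) A) dH := hdx.unique h1
  have hline : HasDerivAt (fun t : ℝ => A + t • dH) dH 0 := by
    have := ((hasDerivAt_id (0:ℝ)).smul_const dH).const_add A; rw [one_smul] at this; exact this
  have h3 : HasDerivAt (fun t : ℝ => NormedSpace.exp (A + t • dH)) ((fderiv ℂ (NormedSpace.exp) A) dH) 0 := by
    have hLR0 : HasFDerivAt (NormedSpace.exp)
        (ContinuousLinearMap.restrictScalars ℝ (fderiv ℂ (NormedSpace.exp) A)) (A + (0:ℝ) • dH) := by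
      rw [zero_smul, add_zero]; exact hLR
    exact hLR0.comp_hasDerivAt 0 hline
  have h4 := exp_line_deriv A dH
  rw [h2]
  exact h3.unique h4

theorem summable_deriv_series (A dH : Matrix (Fin n) (Fin n) ℂ) :
    Summable fun m : ℕ => (m.factorial : ℂ)⁻¹ •
      ∑ j ∈ Finset.range m, A ^ j * dH * A ^ (m - 1 - j) := by
  classical
  set R : ℝ := ‖A‖ + ‖dH‖ with hR
  refine Summable.of_norm_bounded
    (g := fun m : ℕ => (m.factorial : ℝ)⁻¹ * (m * (R ^ (m - 1) * ‖dH‖))) ?_ ?_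
  · rw [← summable_nat_add_iff 1]
    have : (fun m : ℕ => (((m+1).factorial : ℝ))⁻¹ * (((m+1 : ℕ) : ℝ) * (R ^ (m+1-1) * ‖dH‖)))
        = fun m => (R ^ m / m.factorial) * ‖dH‖ := by
      funext m
      have h1 : ((m+1).factorial : ℝ) = (m+1) * m.factorial := by
        push_cast [Nat.factorial_succ]; ring
      have hf : (m.factorial : ℝ) ≠ 0 := Nat.cast_ne_zero.2 m.factorial_ne_zero
      have hm1 : ((m:ℝ)+1) ≠ 0 := by positivity
      rw [h1]
      push_cast
      field_simp
    rw [this]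
    exact (Real.summable_pow_div_factorial R).mul_right _
  · intro m
    have hterm : ∀ j ∈ Finset.range m,
        ‖A ^ j * dH * A ^ (m - 1 - j)‖ ≤ R ^ (m-1) * ‖dH‖ := by
      intro j hj
      have hj' : j < m := Finset.mem_range.1 hj
      have hAR : ‖A‖ ≤ R := le_add_of_nonneg_right (norm_nonneg _)
      calc ‖A ^ j * dH * A ^ (m-1-j)‖ ≤ ‖A ^ j * dH‖ * ‖A‖ ^ (m-1-j) :=
            norm_mul_pow_le A (A ^ j * dH) (m-1-j)
      _ ≤ (‖A‖ ^ j * ‖dH‖) * ‖A‖ ^ (m-1-j) :=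
            mul_le_mul_of_nonneg_right (norm_pow_mul_le A dH j) (by positivity)
      _ ≤ (R ^ j * ‖dH‖) * R ^ (m-1-j) := by
            have : (0:ℝ) ≤ ‖A‖ := norm_nonneg _
            gcongr
      _ = R ^ (j + (m-1-j)) * ‖dH‖ := by rw [pow_add]; ring
      _ = R ^ (m-1) * ‖dH‖ := by congr 2; omega
    calc ‖(m.factorial : ℂ)⁻¹ • ∑ j ∈ Finset.range m, A ^ j * dH * A ^ (m-1-j)‖
        = (m.factorial : ℝ)⁻¹ * ‖∑ j ∈ Finset.range m, A ^ j * dH * A ^ (m-1-j)‖ := by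
          rw [norm_smul]; congr 1; simp
    _ ≤ (m.factorial : ℝ)⁻¹ * ∑ j ∈ Finset.range m, ‖A ^ j * dH * A ^ (m-1-j)‖ :=
          mul_le_mul_of_nonneg_left (norm_sum_le _ _) (by positivity)
    _ ≤ (m.factorial : ℝ)⁻¹ * ∑ j ∈ Finset.range m, R ^ (m-1) * ‖dH‖ :=
          mul_le_mul_of_nonneg_left (Finset.sum_le_sum hterm) (by positivity)
    _ = (m.factorial : ℝ)⁻¹ * (m * (R ^ (m-1) * ‖dH‖)) := by
          rw [Finset.sum_const, Finset.card_range, nsmul_eq_mul]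

theorem sandwich_entry (H : ℝ → Matrix (Fin n) (Fin n) ℂ) (s : ℝ)
    (dH dx : Matrix (Fin n) (Fin n) ℂ)
    (hdH : ∀ i j, HasDerivAt (fun t => H t i j) (dH i j) s)
    (hdx : ∀ i j, HasDerivAt (fun t => NormedSpace.exp (H t) i j) (dx i j) s)
    (P Q : Matrix (Fin n) (Fin n) ℂ) (i j : Fin n) :
    (P * dx * Q) i j = ∑' m : ℕ, (m.factorial : ℂ)⁻¹ *
      ((P * (∑ a ∈ Finset.range m, (H s) ^ a * dH * (H s) ^ (m - 1 - a)) * Q) i j) := by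
  have hdx' : dx = ∑' m : ℕ, (m.factorial : ℂ)⁻¹ •
      ∑ a ∈ Finset.range m, (H s) ^ a * dH * (H s) ^ (m - 1 - a) :=
    dx_eq_tsum H s dH dx (hasDerivAt_entrywise.2 hdH) (hasDerivAt_entrywise.2 hdx)
  let φ : Matrix (Fin n) (Fin n) ℂ →L[ℂ] ℂ :=
    LinearMap.toContinuousLinearMap
      { toFun := fun X => (P * X * Q) i j
        map_add' := fun X Y => by simp [Matrix.mul_add, Matrix.add_mul]
        map_smul' := fun c X => by simp [Matrix.mul_smul, Matrix.smul_mul] }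
  have hφ : ∀ X, φ X = (P * X * Q) i j := fun X => rfl
  rw [← hφ, hdx', φ.map_tsum (summable_deriv_series _ _)]
  congr 1
  funext m
  rw [_root_.map_smul, hφ, smul_eq_mul]
end linfty3


theorem scalar_summable (x : ℂ) : Summable fun m : ℕ => (m.factorial : ℂ)⁻¹ * x ^ m := by
  simpa [smul_eq_mul] using expSeries_summable' (𝕂 := ℂ) x

theorem scalar_ne {x y : ℂ} (hxy : x ≠ y) :
    ∑' m : ℕ, (m.factorial : ℂ)⁻¹ * ∑ a ∈ Finset.range m, x ^ a * y ^ (m - 1 - a)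
      = (NormedSpace.exp x - NormedSpace.exp y) / (x - y) := by
  have hxy' : x - y ≠ 0 := sub_ne_zero.2 hxy
  rw [eq_div_iff hxy', ← tsum_mul_right]
  have : (fun m : ℕ => (m.factorial : ℂ)⁻¹ * (∑ a ∈ Finset.range m, x ^ a * y ^ (m-1-a)) * (x - y))
      = fun m : ℕ => (m.factorial : ℂ)⁻¹ * x ^ m - (m.factorial : ℂ)⁻¹ * y ^ m := by
    funext m
    rw [mul_assoc, geom_sum₂_mul, mul_sub]
  rw [this, Summable.tsum_sub (scalar_summable x) (scalar_summable y)]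
  rw [exp_eq_tsum ℂ]
  simp [smul_eq_mul]

theorem scalar_eq (x : ℂ) :
    ∑' m : ℕ, (m.factorial : ℂ)⁻¹ * ∑ a ∈ Finset.range m, x ^ a * x ^ (m - 1 - a)
      = NormedSpace.exp x := by
  have hterm : ∀ m : ℕ, (m.factorial : ℂ)⁻¹ * ∑ a ∈ Finset.range m, x ^ a * x ^ (m - 1 - a)
      = (m.factorial : ℂ)⁻¹ * (m * x ^ (m - 1)) := by
    intro m
    congr 1
    rw [Finset.sum_congr rfl (fun a ha => ?_), Finset.sum_const, Finset.card_range,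
      nsmul_eq_mul]
    have : a < m := Finset.mem_range.1 ha
    rw [← pow_add]
    congr 1
    omega
  simp only [hterm]
  have hsucc : ∀ m : ℕ, ((m+1).factorial : ℂ)⁻¹ * (((m+1:ℕ):ℂ) * x ^ (m + 1 - 1))
      = (m.factorial : ℂ)⁻¹ * x ^ m := by
    intro m
    have h1 : ((m+1).factorial : ℂ) = ((m+1:ℕ):ℂ) * m.factorial := by
      push_cast [Nat.factorial_succ]; ring
    have hf : ((m.factorial : ℂ)) ≠ 0 := Nat.cast_ne_zero.2 m.factorial_ne_zero
    have hm1 : (((m+1:ℕ):ℂ)) ≠ 0 := Nat.cast_ne_zero.2 (Nat.succ_ne_zero m)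
    rw [h1, mul_inv, mul_comm ((((m+1:ℕ):ℂ))⁻¹) (((m.factorial:ℂ))⁻¹), mul_assoc,
      ← mul_assoc ((((m+1:ℕ):ℂ))⁻¹), inv_mul_cancel₀ hm1, one_mul]
    norm_num
  have hsummable : Summable fun m : ℕ => (m.factorial : ℂ)⁻¹ * (m * x ^ (m - 1)) := by
    rw [← summable_nat_add_iff 1]
    simpa only [hsucc] using scalar_summable x
  rw [Summable.tsum_eq_zero_add hsummable]
  simp only [hsucc]
  rw [exp_eq_tsum ℂ]
  simp [smul_eq_mul]

theorem scalar_factor_eq (x : ℝ) :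
    Complex.exp (-(x:ℂ)/2) * Complex.exp (-(x:ℂ)/2) * Complex.exp (x:ℂ) = 1 := by
  rw [← Complex.exp_add, ← Complex.exp_add,
    show (-(x:ℂ)/2 + -(x:ℂ)/2 + x) = 0 by ring, Complex.exp_zero]

theorem scalar_factor_ne {x y : ℝ} (hxy : x ≠ y) :
    ((((x - y) / 2) / Real.sinh ((x - y) / 2) : ℝ) : ℂ) *
      (Complex.exp (-(x:ℂ)/2) * Complex.exp (-(y:ℂ)/2) *
        ((Complex.exp (x:ℂ) - Complex.exp (y:ℂ)) / ((x:ℂ) - (y:ℂ)))) = 1 := by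
  have hxy2 : (x - y)/2 ≠ 0 := div_ne_zero (sub_ne_zero.2 hxy) two_ne_zero
  have hs : Real.sinh ((x - y)/2) ≠ 0 := Real.sinh_ne_zero.2 hxy2
  have hxyC : ((x:ℂ) - y) ≠ 0 := sub_ne_zero.2 (by exact_mod_cast hxy)
  have hkey : Complex.exp (-(x:ℂ)/2) * Complex.exp (-(y:ℂ)/2) *
      (Complex.exp (x:ℂ) - Complex.exp (y:ℂ))
      = ((2 * Real.sinh ((x - y)/2) : ℝ) : ℂ) := by
    rw [Real.sinh_eq]
    push_cast
    simp only [mul_sub, ← Complex.exp_add]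
    rw [show (-(x:ℂ)/2 + -(y:ℂ)/2 + x) = ((x:ℂ)-y)/2 by ring,
      show (-(x:ℂ)/2 + -(y:ℂ)/2 + y) = -(((x:ℂ)-y)/2) by ring]
    ring
  have hrw : Complex.exp (-(x:ℂ)/2) * Complex.exp (-(y:ℂ)/2) *
      ((Complex.exp (x:ℂ) - Complex.exp (y:ℂ)) / ((x:ℂ) - (y:ℂ)))
      = ((2 * Real.sinh ((x - y)/2) : ℝ) : ℂ) / ((x:ℂ) - y) := by
    rw [← hkey]; ring
  rw [hrw]
  obtain ⟨S0, hS0, hSne⟩ : ∃ S0 : ℝ, Real.sinh ((x-y)/2) = S0 ∧ S0 ≠ 0 := ⟨_, rfl, hs⟩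
  rw [hS0]
  have hS0C : (S0:ℂ) ≠ 0 := by exact_mod_cast hSne
  push_cast
  field_simp

attribute [local instance] Matrix.normedAddCommGroup Matrix.normedSpace

noncomputable def entryCLM' (n : ℕ) (i j : Fin n) :
    Matrix (Fin n) (Fin n) ℂ →L[ℂ] ℂ :=
  LinearMap.toContinuousLinearMap
    { toFun := fun A => A i j
      map_add' := fun _ _ => rfl
      map_smul' := fun _ _ => rfl }

theorem hasDerivAt_entrywise' {n : ℕ} {f : ℝ → Matrix (Fin n) (Fin n) ℂ}
    {f' : Matrix (Fin n) (Fin n) ℂ} {s : ℝ} :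
    HasDerivAt f f' s ↔ ∀ i j, HasDerivAt (fun t => f t i j) (f' i j) s := by
  have key : ∀ A : Matrix (Fin n) (Fin n) ℂ,
      A = ∑ i, ∑ j, (A i j) • Matrix.single i j (1 : ℂ) := by
    intro A
    conv_lhs => rw [Matrix.matrix_eq_sum_single A]
    refine Finset.sum_congr rfl fun i _ => Finset.sum_congr rfl fun j _ => ?_
    rw [Matrix.smul_single, smul_eq_mul, mul_one]
  constructor
  · intro hf i j
    have := ((entryCLM' n i j).hasFDerivAt.restrictScalars ℝ).comp_hasDerivAt s hf
    exact this
  · intro hf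
    have : HasDerivAt (fun t => ∑ i, ∑ j, (f t i j) • Matrix.single i j (1 : ℂ))
        (∑ i, ∑ j, (f' i j) • Matrix.single i j (1 : ℂ)) s := by
      apply HasDerivAt.fun_sum; intro i _; apply HasDerivAt.fun_sum; intro j _
      exact (hf i j).smul_const _
    rw [key f']
    exact this.congr_of_eventuallyEq (Filter.Eventually.of_forall fun t => (key (f t)))

/-- for a differentiable curve `x(t) = e^{H(t)}` of positive
definite matrices with `H(t)` Hermitian and `H(s) = k diag(h) k†` (`k` unitary,
`h ∈ ℝⁿ`), the derivative of `H` satisfies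
`Ḣ(s) = k (S^h ⊙ (k† (x(s)^{-1/2} ẋ(s) x(s)^{-1/2}) k)) k†`, where `S^h` has
entries `((hᵢ-hⱼ)/2)/sinh((hᵢ-hⱼ)/2)` and `x(s)^{-1/2} = e^{-H(s)/2}`. -/
theorem deriv_log_of_exp_curve (n : ℕ)
    (H : ℝ → Matrix (Fin n) (Fin n) ℂ)
    (hHerm : ∀ t, (H t).IsHermitian)
    (s : ℝ)
    (dH : Matrix (Fin n) (Fin n) ℂ) (hdH : HasDerivAt H dH s)
    (dx : Matrix (Fin n) (Fin n) ℂ)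
    (hdx : HasDerivAt (fun t => NormedSpace.exp (H t)) dx s)
    (k : Matrix.unitaryGroup (Fin n) ℂ) (h : Fin n → ℝ)
    (hHs : H s = (k : Matrix (Fin n) (Fin n) ℂ) *
      Matrix.diagonal (fun i => (h i : ℂ)) * star (k : Matrix (Fin n) (Fin n) ℂ)) :
    dH = (k : Matrix (Fin n) (Fin n) ℂ) *
      Matrix.hadamard
        (Matrix.of fun i j : Fin n =>
          if h i = h j then (1 : ℂ)
          else (((h i - h j) / 2) / Real.sinh ((h i - h j) / 2) : ℝ))
        (star (k : Matrix (Fin n) (Fin n) ℂ) *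
          (NormedSpace.exp (-(1/2 : ℝ) • H s) * dx * NormedSpace.exp (-(1/2 : ℝ) • H s)) *
          (k : Matrix (Fin n) (Fin n) ℂ)) *
      star (k : Matrix (Fin n) (Fin n) ℂ) := by
  classical
  set K : Matrix (Fin n) (Fin n) ℂ := (k : Matrix (Fin n) (Fin n) ℂ) with hKdef
  obtain ⟨hKl, hKr⟩ := Unitary.mem_iff.mp k.prop
  set c : Fin n → ℂ := fun i => (h i : ℂ) with hc
  set dvec : Fin n → ℂ := fun i => Complex.exp (-(c i)/2) with hdvec
  set V' : Matrix (Fin n) (Fin n) ℂ := star K * dH * K with hV'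
  have hdHe := hasDerivAt_entrywise'.1 hdH
  have hdxe := hasDerivAt_entrywise'.1 hdx
  set U : (Matrix (Fin n) (Fin n) ℂ)ˣ := ⟨K, star K, hKr, hKl⟩ with hU
  -- exp of -(1/2) H s
  have hsmul : -(1/2:ℝ) • H s = K * Matrix.diagonal (fun i => -(c i)/2) * star K := by
    have hvec : (fun i => -(c i)/2) = (-(1/2:ℝ)) • c := by
      funext i
      show -(c i)/2 = -(1/2:ℝ) • c i
      rw [Complex.real_smul]
      push_cast
      ring
    rw [hHs, hvec, Matrix.diagonal_smul, Matrix.mul_smul, Matrix.smul_mul]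
  have hP : NormedSpace.exp (-(1/2:ℝ) • H s) = K * Matrix.diagonal dvec * star K := by
    rw [hsmul]
    have hconj : NormedSpace.exp (K * Matrix.diagonal (fun i => -(c i)/2) * star K)
        = K * NormedSpace.exp (Matrix.diagonal (fun i => -(c i)/2)) * star K :=
      Matrix.exp_units_conj U _
    have hexpvec : NormedSpace.exp (fun i => -(c i)/2) = dvec := by
      funext i
      rw [Pi.coe_exp, ← Complex.exp_eq_exp_ℂ]
    rw [hconj, Matrix.exp_diagonal, hexpvec]
  have hconjpow : ∀ a : ℕ, H s ^ a = K * Matrix.diagonal (fun i => c i ^ a) * star K := by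
    intro a
    rw [hHs]
    have := Units.conj_pow U (Matrix.diagonal c) a
    rw [show ((U : Matrix (Fin n) (Fin n) ℂ)) = K from rfl,
      show ((↑U⁻¹ : Matrix (Fin n) (Fin n) ℂ)) = star K from rfl] at this
    rw [this, Matrix.diagonal_pow]
    rfl
  set P1 : Matrix (Fin n) (Fin n) ℂ := Matrix.diagonal dvec * star K with hP1
  set Q1 : Matrix (Fin n) (Fin n) ℂ := K * Matrix.diagonal dvec with hQ1
  have hsand : star K * (NormedSpace.exp (-(1/2:ℝ) • H s) * dx * NormedSpace.exp (-(1/2:ℝ) • H s)) * K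
      = P1 * dx * Q1 := by
    rw [hP, hP1, hQ1]
    have e1 : star K * (K * Matrix.diagonal dvec * star K * dx *
          (K * Matrix.diagonal dvec * star K)) * K
        = (star K * K) * ((Matrix.diagonal dvec * star K) * dx *
          (K * Matrix.diagonal dvec)) * (star K * K) := by
      noncomm_ring
    rw [e1, hKl, Matrix.one_mul, Matrix.mul_one]
  have hterm : ∀ m : ℕ,
      P1 * (∑ a ∈ Finset.range m, H s ^ a * dH * H s ^ (m-1-a)) * Q1
      = ∑ a ∈ Finset.range m, Matrix.diagonal dvec * Matrix.diagonal (fun i => c i ^ a) *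
          V' * Matrix.diagonal (fun i => c i ^ (m-1-a)) * Matrix.diagonal dvec := by
    intro m
    rw [Finset.mul_sum, Finset.sum_mul]
    refine Finset.sum_congr rfl fun a _ => ?_
    rw [hconjpow a, hconjpow (m-1-a), hP1, hQ1, hV']
    have e2 : (Matrix.diagonal dvec * star K) *
          (K * Matrix.diagonal (fun i => c i ^ a) * star K * dH *
            (K * Matrix.diagonal (fun i => c i ^ (m-1-a)) * star K)) *
          (K * Matrix.diagonal dvec)
        = Matrix.diagonal dvec * (star K * K) * Matrix.diagonal (fun i => c i ^ a) *
            ((star K * dH * K)) * Matrix.diagonal (fun i => c i ^ (m-1-a)) *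
            (star K * K) * Matrix.diagonal dvec := by
      noncomm_ring
    rw [e2, hKl, Matrix.mul_one]
    noncomm_ring
  have hentry5 : ∀ (u v w z : Fin n → ℂ) (X : Matrix (Fin n) (Fin n) ℂ) (i j : Fin n),
      (Matrix.diagonal u * Matrix.diagonal v * X * Matrix.diagonal w * Matrix.diagonal z) i j
        = u i * v i * X i j * (w j * z j) := by
    intro u v w z X i j
    rw [Matrix.diagonal_mul_diagonal,
      Matrix.mul_assoc _ (Matrix.diagonal w) (Matrix.diagonal z),
      Matrix.diagonal_mul_diagonal, Matrix.mul_diagonal, Matrix.diagonal_mul]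
  -- main reduction
  suffices hsuf : Matrix.hadamard
      (Matrix.of fun i j : Fin n =>
        if h i = h j then (1 : ℂ)
        else (((h i - h j) / 2) / Real.sinh ((h i - h j) / 2) : ℝ))
      (star K * (NormedSpace.exp (-(1/2 : ℝ) • H s) * dx * NormedSpace.exp (-(1/2 : ℝ) • H s)) * K) = V' by
    rw [hsuf, hV']
    have e3 : K * (star K * dH * K) * star K = (K * star K) * dH * (K * star K) := by
      noncomm_ring
    rw [e3, hKr, Matrix.one_mul, Matrix.mul_one]
  ext i j
  rw [Matrix.hadamard_apply, hsand]
  have hmain := sandwich_entry H s dH dx hdHe hdxe P1 Q1 i j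
  rw [hmain]
  have hentry_m : ∀ m : ℕ, ((P1 * (∑ a ∈ Finset.range m, H s ^ a * dH * H s ^ (m-1-a)) * Q1) i j)
      = ∑ a ∈ Finset.range m, dvec i * c i ^ a * V' i j * (c j ^ (m-1-a) * dvec j) := by
    intro m
    rw [hterm m, Matrix.sum_apply]
    exact Finset.sum_congr rfl fun a _ => hentry5 _ _ _ _ _ i j
  have hfact : ∀ m : ℕ, (m.factorial : ℂ)⁻¹ *
      (∑ a ∈ Finset.range m, dvec i * c i ^ a * V' i j * (c j ^ (m-1-a) * dvec j))
      = (dvec i * dvec j * V' i j) *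
        ((m.factorial : ℂ)⁻¹ * ∑ a ∈ Finset.range m, c i ^ a * c j ^ (m-1-a)) := by
    intro m
    have : ∑ a ∈ Finset.range m, dvec i * c i ^ a * V' i j * (c j ^ (m-1-a) * dvec j)
        = (dvec i * dvec j * V' i j) * ∑ a ∈ Finset.range m, c i ^ a * c j ^ (m-1-a) := by
      rw [Finset.mul_sum]
      exact Finset.sum_congr rfl fun a _ => by ring
    rw [this]; ring
  simp only [hentry_m, hfact]
  rw [tsum_mul_left]
  by_cases heq : h i = h j
  · have hcij : c i = c j := by simp only [hc]; exact_mod_cast heq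
    rw [Matrix.of_apply, if_pos heq]
    have hsum : ∑' m : ℕ, (m.factorial : ℂ)⁻¹ * ∑ a ∈ Finset.range m, c i ^ a * c j ^ (m-1-a)
        = Complex.exp (c i) := by
      simp only [← hcij]
      rw [scalar_eq (c i), ← Complex.exp_eq_exp_ℂ]
    rw [hsum, one_mul]
    have hfac := scalar_factor_eq (h i)
    simp only [hdvec, ← hcij, hc, ← heq]
    linear_combination V' i j * hfac
  · have hcne : c i ≠ c j := by
      simp only [hc]
      exact fun hcc => heq (by exact_mod_cast hcc)
    rw [Matrix.of_apply, if_neg heq]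
    have hsum : ∑' m : ℕ, (m.factorial : ℂ)⁻¹ * ∑ a ∈ Finset.range m, c i ^ a * c j ^ (m-1-a)
        = (NormedSpace.exp (c i) - NormedSpace.exp (c j)) / (c i - c j) := scalar_ne hcne
    rw [hsum, ← Complex.exp_eq_exp_ℂ]
    have hfac := scalar_factor_ne heq
    simp only [hdvec, hc]
    linear_combination V' i j * hfac
end

section
/- Let f : ℝ^n → ℝ be convex differentiable, Q : (ℝ^n)* → ℝ_{≥0} convex with Q² continuously differentiable, and let x(t) solve the Q-gradient flow ẋ(t) = -∇^Q f(x(t)) where ∇^Q f(x) = (1/2) d(Q²)_{df_x}. Then t ↦ Q(df_{x(t)}) is monotonically nonincreasing. -/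
open scoped BigOperators RealInnerProductSpace
open Set Filter Metric Topology

section AuxLemmas

variable {E : Type*} [NormedAddCommGroup E] [InnerProductSpace ℝ E] [CompleteSpace E]

/-- derivative along a line through `y` with direction `v`. -/
lemma aux_line_hasDerivAt {f : E → ℝ} {G y : E} (hd : HasGradientAt f G y) (v : E) :
    HasDerivAt (fun t : ℝ => f (y + t • v)) ⟪G, v⟫ 0 := by
  have h1 : HasDerivAt (fun t : ℝ => y + t • v) v 0 := by
    simpa using ((hasDerivAt_id (0 : ℝ)).smul_const v).const_add y
  have h2 : HasFDerivAt f (InnerProductSpace.toDual ℝ E G) (y + (0 : ℝ) • v) := by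
    simpa using hd.hasFDerivAt
  have h3 := h2.comp_hasDerivAt 0 h1
  exact h3

/-- slope tendsto from the right. -/
lemma aux_slope_tendsto {f : E → ℝ} {G y : E} (hd : HasGradientAt f G y) (v : E) :
    Tendsto (fun t : ℝ => (f (y + t • v) - f y) / t) (𝓝[>] (0 : ℝ)) (𝓝 ⟪G, v⟫) := by
  have := hasDerivAt_iff_tendsto_slope.mp (aux_line_hasDerivAt hd v)
  have h := this.mono_left (nhdsWithin_mono (0 : ℝ) (fun t (ht : t ∈ Ioi (0:ℝ)) => ne_of_gt ht))
  refine h.congr' ?_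
  filter_upwards [self_mem_nhdsWithin] with t ht
  simp [slope_def_field, div_eq_inv_mul]

/-- gradient inequality for convex functions. -/
lemma aux_grad_ineq {f : E → ℝ} {G y : E} (hf : ConvexOn ℝ Set.univ f)
    (hd : HasGradientAt f G y) (z : E) : f y + ⟪G, z - y⟫ ≤ f z := by
  have key : ⟪G, z - y⟫ ≤ f z - f y := by
    refine le_of_tendsto (aux_slope_tendsto hd (z - y)) ?_
    filter_upwards [Ioc_mem_nhdsGT_of_mem (Set.left_mem_Ico.mpr zero_lt_one)] with t ht
    have h1 : y + t • (z - y) = (1 - t) • y + t • z := by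
      rw [smul_sub, sub_smul, one_smul]; abel
    have h2 : f (y + t • (z - y)) ≤ (1 - t) * f y + t * f z := by
      rw [h1]
      exact hf.2 (mem_univ y) (mem_univ z) (by linarith [ht.2]) (le_of_lt ht.1) (by ring)
    rw [div_le_iff₀ ht.1]
    nlinarith [ht.1]
  linarith

/-- a subgradient at a point of differentiability equals the gradient. -/
lemma aux_subgrad_eq {f : E → ℝ} {G y a : E} (hd : HasGradientAt f G y)
    (ha : ∀ z, f y + ⟪a, z - y⟫ ≤ f z) : a = G := by
  have key : ∀ v : E, ⟪a, v⟫ ≤ ⟪G, v⟫ := by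
    intro v
    refine ge_of_tendsto (aux_slope_tendsto hd v) ?_
    filter_upwards [self_mem_nhdsWithin] with t (ht : (0:ℝ) < t)
    have := ha (y + t • v)
    have h2 : ⟪a, t • v⟫ = t * ⟪a, v⟫ := real_inner_smul_right a v t
    rw [le_div_iff₀ ht]
    have h3 : ⟪a, y + t • v - y⟫ ≤ f (y + t • v) - f y := by linarith
    rw [add_sub_cancel_left, h2] at h3
    linarith
  have h := key (a - G)
  rw [inner_sub_right, inner_sub_right] at h
  have h2 : ⟪a - G, a - G⟫ ≤ 0 := by
    rw [inner_sub_left, inner_sub_right, inner_sub_right]; linarith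
  have := real_inner_self_nonpos.mp h2
  rwa [sub_eq_zero] at this

/-- continuity of the gradient of a convex differentiable function, finite dimensions. -/
lemma aux_grad_continuous [FiniteDimensional ℝ E] {f : E → ℝ} {g : E → E}
    (hf : ConvexOn ℝ Set.univ f) (hg : ∀ x, HasGradientAt f (g x) x) : Continuous g := by
  have hfc : Continuous f :=
    continuous_iff_continuousAt.mpr fun y => (hg y).differentiableAt.continuousAt
  rw [continuous_iff_continuousAt]
  intro x₀
  obtain ⟨K, hK⟩ : ∃ K : NNReal, LipschitzOnWith K f (ball x₀ 1) := by
    refine ConvexOn.exists_lipschitzOnWith_of_isBounded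
      (hf.subset (subset_univ _) (convex_ball _ _)) (by norm_num : (1:ℝ) < 2) ?_
    exact (((isCompact_closedBall x₀ 2).image hfc).isBounded).subset
      (Set.image_mono ball_subset_closedBall)
  have hb : ∀ y ∈ ball x₀ (1/2 : ℝ), ‖g y‖ ≤ K := by
    intro y hy
    rcases eq_or_ne (g y) 0 with h0 | h0
    · simp [h0]
    have hgy : (0:ℝ) < ‖g y‖ := norm_pos_iff.mpr h0
    set c : ℝ := (1/4) / (‖g y‖) with hc
    have hcpos : 0 < c := by positivity
    set z : E := y + c • g y with hz
    have hzy : ‖z - y‖ = 1/4 := by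
      rw [hz, add_sub_cancel_left, norm_smul, Real.norm_eq_abs, abs_of_pos hcpos, hc]
      field_simp
    have hdzy : dist z y = 1/4 := by rw [dist_eq_norm, hzy]
    have hzball : z ∈ ball x₀ 1 := by
      rw [mem_ball] at hy ⊢
      have htri : dist z x₀ ≤ dist z y + dist y x₀ := dist_triangle _ _ _
      rw [hdzy] at htri
      linarith
    have hyball : y ∈ ball x₀ 1 := by
      rw [mem_ball] at hy ⊢; linarith
    have hgi := aux_grad_ineq hf (hg y) z
    have hlip : f z - f y ≤ K * ‖z - y‖ := by
      have := hK.dist_le_mul z hzball y hyball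
      rw [Real.dist_eq, dist_eq_norm] at this
      calc f z - f y ≤ |f z - f y| := le_abs_self _
        _ ≤ K * ‖z - y‖ := this
    have hinner : ⟪g y, z - y⟫ = c * ‖g y‖ ^ 2 := by
      rw [hz, add_sub_cancel_left, real_inner_smul_right, real_inner_self_eq_norm_sq]
    have : c * ‖g y‖ ^ 2 ≤ K * (1/4) := by
      rw [← hinner, ← hzy]; linarith
    have hc4 : c * ‖g y‖ ^ 2 = (1/4) * ‖g y‖ := by
      rw [hc]; field_simp
    rw [hc4] at this
    nlinarith
  -- sequential argument
  refine tendsto_of_subseq_tendsto ?_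
  intro ns hns
  have hball : ∀ᶠ k in atTop, ns k ∈ ball x₀ (1/2 : ℝ) :=
    hns (ball_mem_nhds _ (by norm_num))
  have hfreq : ∃ᶠ k in atTop, g (ns k) ∈ closedBall (0 : E) K := by
    refine (hball.mono ?_).frequently
    intro k hk
    exact mem_closedBall_zero_iff.mpr (hb _ hk)
  obtain ⟨a, _, ms, hms, hconv⟩ :=
    (isCompact_closedBall (0 : E) K).tendsto_subseq' hfreq
  refine ⟨ms, ?_⟩
  have hxconv : Tendsto (fun k => ns (ms k)) atTop (𝓝 x₀) :=
    hns.comp hms.tendsto_atTop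
  have hsub : ∀ z, f x₀ + ⟪a, z - x₀⟫ ≤ f z := by
    intro z
    have hlim : Tendsto (fun k => f (ns (ms k)) + ⟪g (ns (ms k)), z - ns (ms k)⟫) atTop
        (𝓝 (f x₀ + ⟪a, z - x₀⟫)) :=
      ((hfc.continuousAt.tendsto.comp hxconv).add
        (hconv.inner (tendsto_const_nhds.sub hxconv)))
    exact le_of_tendsto hlim (Eventually.of_forall fun k => aux_grad_ineq hf (hg _) z)
  have ha : a = g x₀ := aux_subgrad_eq (hg x₀) hsub
  rw [ha] at hconv
  exact hconv

end AuxLemmas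

/-- along the `Q`-gradient flow `ẋ = -∇^Q f(x)` with
`∇^Q f(x) = (1/2) d(Q²)_{df_x}`, the quantity `Q(df_{x(t)})` is monotonically
nonincreasing, for `f` convex differentiable with gradient `g` and
`Q : (ℝⁿ)* → ℝ≥0` convex with `Q²` continuously differentiable. -/

theorem Q_gradient_flow_monotone (n : ℕ)
    (f : EuclideanSpace ℝ (Fin n) → ℝ)
    (hf : ConvexOn ℝ Set.univ f)
    (g : EuclideanSpace ℝ (Fin n) → EuclideanSpace ℝ (Fin n))
    (hg : ∀ x, HasGradientAt f (g x) x)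
    (Q : EuclideanSpace ℝ (Fin n) → ℝ)
    (hQnn : ∀ p, 0 ≤ Q p)
    (hQconv : ConvexOn ℝ Set.univ Q)
    (G : EuclideanSpace ℝ (Fin n) → EuclideanSpace ℝ (Fin n))
    (hG : ∀ p, HasGradientAt (fun q => (Q q) ^ 2) (G p) p)
    (hGcont : Continuous G)
    (x : ℝ → EuclideanSpace ℝ (Fin n))
    (hx : ∀ t : ℝ, HasDerivAt x (-((1/2 : ℝ) • G (g (x t)))) t) :
    Antitone (fun t : ℝ => Q (g (x t))) := by
  have hQ2conv : ConvexOn ℝ Set.univ (fun q => Q q ^ 2) := by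
    refine ⟨convex_univ, fun p _ q _ a b ha hb hab => ?_⟩
    have h1 : Q (a • p + b • q) ≤ a * Q p + b * Q q := hQconv.2 trivial trivial ha hb hab
    have h2 : Q (a • p + b • q) ^ 2 ≤ (a * Q p + b * Q q) ^ 2 := by
      nlinarith [hQnn (a • p + b • q), hQnn p, hQnn q, mul_nonneg ha (hQnn p),
        mul_nonneg hb (hQnn q)]
    have h3 : (a * Q p + b * Q q) ^ 2 ≤ a * Q p ^ 2 + b * Q q ^ 2 := by
      nlinarith [mul_nonneg ha hb, sq_nonneg (Q p - Q q)]
    simp only [smul_eq_mul]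
    linarith
  have hgc : Continuous g := aux_grad_continuous hf hg
  have hxc : Continuous x :=
    continuous_iff_continuousAt.mpr fun t => (hx t).continuousAt
  have hQ2c : Continuous (fun q => Q q ^ 2) :=
    continuous_iff_continuousAt.mpr fun p => (hG p).differentiableAt.continuousAt
  set φ : ℝ → ℝ := fun t => Q (g (x t)) ^ 2 with hφdef
  have hφc : Continuous φ := hQ2c.comp (hgc.comp hxc)
  -- Step A : mean value inequality
  have stepA : ∀ s t : ℝ, s ≤ t → (∫ σ in s..t, φ σ) ≤ (t - s) * φ s := by
    intro s t hst
    set v : ℝ → EuclideanSpace ℝ (Fin n) := fun τ => -((1/2 : ℝ) • G (g (x τ))) with hv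
    have hF : ∀ τ, HasDerivAt (fun τ => f (x τ)) ⟪g (x τ), v τ⟫ τ := by
      intro τ
      exact ((hg (x τ)).hasFDerivAt).comp_hasDerivAt τ (hx τ)
    have hI : ∀ τ, HasDerivAt (fun τ => ⟪g (x s), x τ⟫) ⟪g (x s), v τ⟫ τ := by
      intro τ
      exact ((innerSL ℝ (g (x s))).hasFDerivAt (x := x τ)).comp_hasDerivAt τ (hx τ)
    set Φ : ℝ → ℝ := fun τ => ∫ σ in s..τ, φ σ with hΦdef
    have hΦ : ∀ τ, HasDerivAt Φ (φ τ) τ := fun τ =>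
      intervalIntegral.integral_hasDerivAt_right (hφc.intervalIntegrable _ _)
        (hφc.stronglyMeasurable.stronglyMeasurableAtFilter) hφc.continuousAt
    set M : ℝ → ℝ := fun τ => (τ - s) * φ s
        - 2 * (f (x τ) - f (x s) - (⟪g (x s), x τ⟫ - ⟪g (x s), x s⟫)) - Φ τ with hMdef
    have hM : ∀ τ, HasDerivAt M
        (φ s - 2 * (⟪g (x τ), v τ⟫ - ⟪g (x s), v τ⟫) - φ τ) τ := by
      intro τ
      have h1 : HasDerivAt (fun τ : ℝ => (τ - s) * φ s) (φ s) τ := by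
        simpa using ((hasDerivAt_id τ).sub_const s).mul_const (φ s)
      exact (h1.sub ((((hF τ).sub_const (f (x s))).sub
        ((hI τ).sub_const _)).const_mul 2)).sub (hΦ τ)
    have hMmono : Monotone M := by
      refine monotone_of_hasDerivAt_nonneg hM ?_
      intro τ
      show (0:ℝ) ≤ φ s - 2 * (⟪g (x τ), v τ⟫ - ⟪g (x s), v τ⟫) - φ τ
      have hkey := aux_grad_ineq hQ2conv (hG (g (x τ))) (g (x s))
      simp only [inner_sub_right] at hkey
      have e1 : ⟪g (x τ), v τ⟫ = -(1/2) * ⟪G (g (x τ)), g (x τ)⟫ := by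
        rw [show v τ = -((1/2 : ℝ) • G (g (x τ))) from rfl, inner_neg_right,
          real_inner_smul_right, real_inner_comm]
        ring
      have e2 : ⟪g (x s), v τ⟫ = -(1/2) * ⟪G (g (x τ)), g (x s)⟫ := by
        rw [show v τ = -((1/2 : ℝ) • G (g (x τ))) from rfl, inner_neg_right,
          real_inner_smul_right, real_inner_comm]
        ring
      rw [e1, e2]
      simp only [hφdef]
      linarith [hkey]
    have hMs : M s = 0 := by
      simp [hMdef, hΦdef, intervalIntegral.integral_same]
    have hMt : (0:ℝ) ≤ M t := by rw [← hMs]; exact hMmono hst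
    have hgi : (0:ℝ) ≤ f (x t) - f (x s) - (⟪g (x s), x t⟫ - ⟪g (x s), x s⟫) := by
      have := aux_grad_ineq hf (hg (x s)) (x t)
      rw [inner_sub_right] at this
      linarith
    have hfin : Φ t ≤ (t - s) * φ s := by
      rw [hMdef] at hMt
      simp only at hMt
      linarith
    simpa [hΦdef] using hfin
  -- Step B : φ is antitone
  have hanti : Antitone φ := by
    intro a b hab
    rcases eq_or_lt_of_le hab with rfl | hlt
    · exact le_refl _
    by_contra hcon
    push_neg at hcon
    obtain ⟨c, hc_mem, hc_min⟩ := (isCompact_Icc (a := a) (b := b)).exists_isMinOn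
      (nonempty_Icc.mpr hab) hφc.continuousOn
    have hmin : ∀ τ ∈ Icc a b, φ c ≤ φ τ := fun τ hτ => hc_min hτ
    have hφca : φ c ≤ φ a := hmin a (left_mem_Icc.mpr hab)
    have hε : (0:ℝ) < (φ b - φ c) / 2 := by linarith
    set ε : ℝ := (φ b - φ c) / 2 with hεdef
    have hcb : ContinuousAt φ b := hφc.continuousAt
    obtain ⟨δ, hδpos, hδ⟩ := Metric.continuousAt_iff.mp hcb ε hε
    set d : ℝ := max c (b - δ/2) with hddef
    have hcd : c ≤ d := le_max_left _ _
    have hdb : d < b := by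
      apply max_lt
      · exact lt_of_le_of_ne hc_mem.2 (by rintro rfl; linarith)
      · linarith
    have hda : a ≤ d := le_trans hc_mem.1 hcd
    have hbump : ∀ τ ∈ Icc d b, φ c + ε ≤ φ τ := by
      intro τ hτ
      have h1 : dist τ b < δ := by
        rw [Real.dist_eq, abs_of_nonpos (by linarith [hτ.2])]
        have : b - δ/2 ≤ d := le_max_right _ _
        have := hτ.1
        linarith
      have h2 := hδ h1
      rw [Real.dist_eq, abs_lt] at h2
      have : φ b = φ c + 2 * ε := by rw [hεdef]; ring
      linarith
    have hint1 : (d - c) * φ c ≤ ∫ σ in c..d, φ σ := by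
      have := intervalIntegral.integral_mono_on (μ := MeasureTheory.volume) hcd
        (continuous_const.intervalIntegrable _ _) (hφc.intervalIntegrable c d)
        (fun τ hτ => hmin τ ⟨le_trans hc_mem.1 hτ.1, le_trans hτ.2 (le_of_lt hdb)⟩)
      rwa [intervalIntegral.integral_const, smul_eq_mul] at this
    have hint2 : (b - d) * (φ c + ε) ≤ ∫ σ in d..b, φ σ := by
      have := intervalIntegral.integral_mono_on (μ := MeasureTheory.volume) (le_of_lt hdb)
        (continuous_const.intervalIntegrable _ _) (hφc.intervalIntegrable d b)
        (fun τ hτ => hbump τ hτ)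
      rwa [intervalIntegral.integral_const, smul_eq_mul] at this
    have hsplit : (∫ σ in c..b, φ σ) = (∫ σ in c..d, φ σ) + ∫ σ in d..b, φ σ :=
      (intervalIntegral.integral_add_adjacent_intervals
        (hφc.intervalIntegrable c d) (hφc.intervalIntegrable d b)).symm
    have hA := stepA c b (le_trans hcd (le_of_lt hdb))
    rw [hsplit] at hA
    nlinarith [hε, hdb]
  -- conclude
  intro a b hab
  have h := hanti hab
  have ha : Q (g (x a)) = Real.sqrt (φ a) := by
    rw [hφdef]; exact (Real.sqrt_sq (hQnn _)).symm
  have hb : Q (g (x b)) = Real.sqrt (φ b) := by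
    rw [hφdef]; exact (Real.sqrt_sq (hQnn _)).symm
  show Q (g (x b)) ≤ Q (g (x a))
  rw [ha, hb]
  exact Real.sqrt_le_sqrt h
end

section
/- Moment map as transported differential of the Kempf–Ness function: for a nonzero tensor v and positive definite x = (x₁,…,x_d), the differential of Φ_v(x) = log⟨v, x·v⟩ in direction X = (X₁,…,X_d) (Hermitian) equals Σᵢ trace( μ_i(x^{1/2}·v) · x_i^{-1/2} X_i x_i^{-1/2} ), where x^{1/2} = (x₁^{1/2},…,x_d^{1/2}) and μ_i is the i-th moment map component. -/
open Matrix
open scoped BigOperators ComplexOrder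

/-- The factor-wise action of a tuple of matrices on a `d`-tensor. -/
noncomputable def tupleAction {d : ℕ} {n : Fin d → ℕ}
    (a : ∀ i : Fin d, Matrix (Fin (n i)) (Fin (n i)) ℂ)
    (v : (∀ i : Fin d, Fin (n i)) → ℂ) : (∀ i : Fin d, Fin (n i)) → ℂ :=
  fun j => ∑ j' : (∀ i : Fin d, Fin (n i)), (∏ i : Fin d, a i (j i) (j' i)) * v j'

/-- The action of a matrix `H` on the `k`-th factor of a `d`-tensor. -/
noncomputable def factorAction {d : ℕ} {n : Fin d → ℕ} (k : Fin d)
    (H : Matrix (Fin (n k)) (Fin (n k)) ℂ)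
    (v : (∀ i : Fin d, Fin (n i)) → ℂ) : (∀ i : Fin d, Fin (n i)) → ℂ :=
  fun j => ∑ i : Fin (n k), H (j k) i * v (Function.update j k i)

/-- The Hermitian inner product on the tensor space. -/
noncomputable def tensorInner {d : ℕ} {n : Fin d → ℕ}
    (v w : (∀ i : Fin d, Fin (n i)) → ℂ) : ℂ :=
  ∑ j : (∀ i : Fin d, Fin (n i)), (starRingEnd ℂ) (v j) * w j

section Aux
variable {d : ℕ} {n : Fin d → ℕ}

lemma tupleAction_zero (a : ∀ i : Fin d, Matrix (Fin (n i)) (Fin (n i)) ℂ) :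
    tupleAction a (0 : (∀ i : Fin d, Fin (n i)) → ℂ) = 0 := by
  funext j; simp [tupleAction]

lemma tupleAction_one (v : (∀ i : Fin d, Fin (n i)) → ℂ) :
    tupleAction (fun i => (1 : Matrix (Fin (n i)) (Fin (n i)) ℂ)) v = v := by
  funext j
  have h : ∀ j' : (∀ i : Fin d, Fin (n i)),
      (∏ i : Fin d, (1 : Matrix (Fin (n i)) (Fin (n i)) ℂ) (j i) (j' i))
        = if j = j' then 1 else 0 := by
    intro j'
    by_cases h : j = j'
    · subst h; simp [Matrix.one_apply]
    · obtain ⟨i, hi⟩ := Function.ne_iff.mp h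
      rw [if_neg h]
      refine Finset.prod_eq_zero (M₀ := ℂ) (Finset.mem_univ i) ?_
      exact Matrix.one_apply_ne hi
  simp [tupleAction, h]

lemma tupleAction_tupleAction (a b : ∀ i : Fin d, Matrix (Fin (n i)) (Fin (n i)) ℂ)
    (v : (∀ i : Fin d, Fin (n i)) → ℂ) :
    tupleAction a (tupleAction b v) = tupleAction (fun i => a i * b i) v := by
  funext j
  have key : ∀ j'' : (∀ i : Fin d, Fin (n i)),
      (∑ j' : (∀ i : Fin d, Fin (n i)), ∏ i : Fin d, a i (j i) (j' i) * b i (j' i) (j'' i))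
        = ∏ i : Fin d, (a i * b i) (j i) (j'' i) := by
    intro j''
    simp only [Matrix.mul_apply]
    rw [Finset.prod_univ_sum, Fintype.piFinset_univ]
  simp only [tupleAction, Finset.mul_sum]
  rw [Finset.sum_comm]
  refine Finset.sum_congr rfl fun j'' _ => ?_
  rw [← key j'', Finset.sum_mul]
  refine Finset.sum_congr rfl fun j' _ => ?_
  rw [← mul_assoc, ← Finset.prod_mul_distrib]

lemma tensorInner_tupleAction_left (a : ∀ i : Fin d, Matrix (Fin (n i)) (Fin (n i)) ℂ)
    (v w : (∀ i : Fin d, Fin (n i)) → ℂ) :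
    tensorInner (tupleAction a v) w
      = tensorInner v (tupleAction (fun i => (a i)ᴴ) w) := by
  simp only [tensorInner, tupleAction, map_sum, Matrix.conjTranspose_apply,
    Finset.sum_mul, Finset.mul_sum, Complex.star_def]
  rw [Finset.sum_comm]
  refine Finset.sum_congr rfl fun j' _ => Finset.sum_congr rfl fun j _ => ?_
  rw [_root_.map_mul, map_prod]
  ring

lemma prod_update_matrix (c : ∀ i : Fin d, Matrix (Fin (n i)) (Fin (n i)) ℂ) (k : Fin d)
    (B : Matrix (Fin (n k)) (Fin (n k)) ℂ) (j j' : ∀ i : Fin d, Fin (n i)) :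
    (∏ i : Fin d, (Function.update c k B) i (j i) (j' i))
      = B (j k) (j' k) * ∏ i ∈ Finset.univ.erase k, c i (j i) (j' i) := by
  rw [← Finset.mul_prod_erase Finset.univ _ (Finset.mem_univ k)]
  congr 1
  · rw [Function.update_self]
  · exact Finset.prod_congr rfl fun m hm => by
      rw [Function.update_of_ne (Finset.ne_of_mem_erase hm)]

lemma prod_update_index (b : ∀ i : Fin d, Matrix (Fin (n i)) (Fin (n i)) ℂ) (k : Fin d)
    (i : Fin (n k)) (j j' : ∀ i : Fin d, Fin (n i)) :
    (∏ m : Fin d, b m ((Function.update j k i) m) (j' m))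
      = b k i (j' k) * ∏ m ∈ Finset.univ.erase k, b m (j m) (j' m) := by
  rw [← Finset.mul_prod_erase Finset.univ _ (Finset.mem_univ k)]
  congr 1
  · rw [Function.update_self]
  · exact Finset.prod_congr rfl fun m hm => by
      rw [Function.update_of_ne (Finset.ne_of_mem_erase hm)]

lemma factorAction_tupleAction (k : Fin d) (H : Matrix (Fin (n k)) (Fin (n k)) ℂ)
    (b : ∀ i : Fin d, Matrix (Fin (n i)) (Fin (n i)) ℂ)
    (v : (∀ i : Fin d, Fin (n i)) → ℂ) :
    factorAction k H (tupleAction b v)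
      = tupleAction (Function.update b k (H * b k)) v := by
  funext j
  simp only [factorAction, tupleAction, prod_update_index, prod_update_matrix,
    Matrix.mul_apply, Finset.mul_sum, Finset.sum_mul]
  rw [Finset.sum_comm]
  refine Finset.sum_congr rfl fun j' _ => Finset.sum_congr rfl fun i _ => ?_
  ring

end Aux

lemma sqrt_aux (m : ℕ) (x : Matrix (Fin m) (Fin m) ℂ) (hx : x.PosDef) (s : Matrix (Fin m) (Fin m) ℂ)
  (hs : s = ((hx.posSemidef).1.eigenvectorUnitary : Matrix (Fin m) (Fin m) ℂ) *
      diagonal ((↑) ∘ (Real.sqrt ·) ∘ (hx.posSemidef).1.eigenvalues) *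
      (star (hx.posSemidef).1.eigenvectorUnitary : Matrix (Fin m) (Fin m) ℂ)) :
    sᴴ = s ∧ s * s = x := by
  constructor
  · rw [hs]
    have hdiag : star ((↑) ∘ (Real.sqrt ·) ∘ (hx.posSemidef).1.eigenvalues : Fin m → ℂ)
        = ((↑) ∘ (Real.sqrt ·) ∘ (hx.posSemidef).1.eigenvalues) := by
      funext k; simp
    simp only [Matrix.conjTranspose_mul, Matrix.mul_assoc, Matrix.diagonal_conjTranspose, hdiag,
      Matrix.star_eq_conjTranspose, Matrix.conjTranspose_conjTranspose]
  · set D : Matrix (Fin m) (Fin m) ℂ :=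
      diagonal ((↑) ∘ (Real.sqrt ·) ∘ (hx.posSemidef).1.eigenvalues) with hD
    have hU := Unitary.coe_star_mul_self (hx.posSemidef).1.eigenvectorUnitary
    have hd : D * D = diagonal (RCLike.ofReal ∘ (hx.posSemidef).1.eigenvalues : Fin m → ℂ) := by
      rw [hD, diagonal_mul_diagonal]
      congr 1; funext k
      simp only [Function.comp_apply]
      rw [← Complex.ofReal_mul, Real.mul_self_sqrt ((hx.posSemidef).eigenvalues_nonneg k)]
      rfl
    conv_rhs => rw [(hx.posSemidef).1.spectral_theorem, Unitary.conjStarAlgAut_apply]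
    rw [hs, ← hd]
    generalize ((hx.posSemidef).1.eigenvectorUnitary : Matrix (Fin m) (Fin m) ℂ) = U at hU ⊢
    calc _ = U * (D * (star U * U) * D) * star U := by simp only [Matrix.mul_assoc]
      _ = _ := by rw [hU, Matrix.mul_one]

/-- the differential of the Kempf–Ness function
`Φ_v(x) = log ⟨v, x·v⟩` at positive definite `x = (x₁,…,x_d)` in a Hermitian
direction `X = (X₁,…,X_d)` equals
`Σᵢ trace (μᵢ(x^{1/2}·v) · xᵢ^{-1/2} Xᵢ xᵢ^{-1/2})`, where `μᵢ` are the moment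
map components of the transformed tensor `x^{1/2}·v`. -/
theorem kempf_ness_differential_eq_moment_map (d : ℕ) (n : Fin d → ℕ)
    (v : (∀ i : Fin d, Fin (n i)) → ℂ) (hv : v ≠ 0)
    (x X : ∀ i : Fin d, Matrix (Fin (n i)) (Fin (n i)) ℂ)
    (hx : ∀ i, (x i).PosDef) (hX : ∀ i, (X i).IsHermitian)
    (s : ∀ i : Fin d, Matrix (Fin (n i)) (Fin (n i)) ℂ)
    (hs : ∀ i, s i = (((hx i).posSemidef).1.eigenvectorUnitary : Matrix (Fin (n i)) (Fin (n i)) ℂ) *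
      diagonal ((↑) ∘ (Real.sqrt ·) ∘ ((hx i).posSemidef).1.eigenvalues) *
      (star ((hx i).posSemidef).1.eigenvectorUnitary : Matrix (Fin (n i)) (Fin (n i)) ℂ))
    (M : ∀ i : Fin d, Matrix (Fin (n i)) (Fin (n i)) ℂ)
    (hM : ∀ (i : Fin d) (H : Matrix (Fin (n i)) (Fin (n i)) ℂ), H.IsHermitian →
      (M i * H).trace =
        tensorInner (tupleAction s v) (factorAction i H (tupleAction s v)) /
          tensorInner (tupleAction s v) (tupleAction s v)) :
    HasDerivAt
      (fun t : ℝ => Real.log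
        ((tensorInner v (tupleAction (fun i => x i + t • X i) v)).re))
      (∑ i : Fin d, ((M i * ((s i)⁻¹ * X i * (s i)⁻¹)).trace).re) 0 := by
  classical
  set w := tupleAction s v with hw
  have hsherm : ∀ i, (s i)ᴴ = s i := fun i => by
    exact (sqrt_aux _ _ (hx i) _ (hs i)).1
  have hss : ∀ i, s i * s i = x i := fun i => by
    exact (sqrt_aux _ _ (hx i) _ (hs i)).2
  have hsu : ∀ i, IsUnit (s i).det := by
    intro i
    have hdet : (s i).det * (s i).det = (x i).det := by rw [← Matrix.det_mul, hss i]
    have hxdet : (x i).det ≠ 0 := ((hx i).det_pos).ne'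
    exact isUnit_iff_ne_zero.mpr fun h => hxdet (by rw [← hdet, h, mul_zero])
  have hinv : ∀ i, (s i)⁻¹ * s i = 1 := fun i => Matrix.nonsing_inv_mul _ (hsu i)
  have hinv' : ∀ i, s i * (s i)⁻¹ = 1 := fun i => Matrix.mul_nonsing_inv _ (hsu i)
  set f0 : ℂ := tensorInner v (tupleAction x v) with hf0
  -- ⟨w, w⟩ = f0
  have hwx : tensorInner w w = f0 := by
    have harg : (fun i => (s i)ᴴ * s i) = x := funext fun i => by rw [hsherm i, hss i]
    rw [hw, tensorInner_tupleAction_left, tupleAction_tupleAction, harg]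
  -- w ≠ 0
  have hw0 : w ≠ 0 := by
    intro h
    apply hv
    have hvw : tupleAction (fun i => (s i)⁻¹) w = v := by
      rw [hw, tupleAction_tupleAction]
      have h1 : (fun i => (s i)⁻¹ * s i)
          = fun i => (1 : Matrix (Fin (n i)) (Fin (n i)) ℂ) := funext fun i => hinv i
      rw [h1, tupleAction_one]
    rw [← hvw, h, tupleAction_zero]
  -- f0 is a positive real
  set R : ℝ := ∑ j : (∀ i : Fin d, Fin (n i)), Complex.normSq (w j) with hR
  have hf0R : f0 = (R : ℂ) := by
    rw [← hwx, hR]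
    push_cast
    exact Finset.sum_congr rfl fun j _ => Complex.normSq_eq_conj_mul_self.symm
  have hRpos : 0 < R := by
    obtain ⟨j, hj⟩ := Function.ne_iff.mp hw0
    exact Finset.sum_pos' (fun j _ => Complex.normSq_nonneg _)
      ⟨j, Finset.mem_univ j, Complex.normSq_pos.mpr hj⟩
  have hf0re : f0.re = R := by rw [hf0R]; simp
  -- Hermitian direction
  have hH : ∀ i, ((s i)⁻¹ * X i * (s i)⁻¹).IsHermitian := by
    intro i
    have h1 : ((s i)⁻¹)ᴴ = (s i)⁻¹ := by
      rw [Matrix.conjTranspose_nonsing_inv, hsherm i]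
    show ((s i)⁻¹ * X i * (s i)⁻¹)ᴴ = _
    rw [Matrix.conjTranspose_mul, Matrix.conjTranspose_mul, h1, (hX i).eq, Matrix.mul_assoc]
  -- the transported factor action
  have hfac : ∀ i, tensorInner w (factorAction i ((s i)⁻¹ * X i * (s i)⁻¹) w)
      = tensorInner v (tupleAction (Function.update x i (X i)) v) := by
    intro i
    have harg : (fun m => (s m)ᴴ * Function.update s i ((s i)⁻¹ * X i * (s i)⁻¹ * s i) m)
        = Function.update x i (X i) := by
      funext m
      rcases eq_or_ne m i with rfl | hmi
      · rw [Function.update_self, Function.update_self, hsherm m]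
        have h1 : (s m)⁻¹ * X m * (s m)⁻¹ * s m = (s m)⁻¹ * X m := by
          rw [Matrix.mul_assoc, hinv m, Matrix.mul_one]
        rw [h1, ← Matrix.mul_assoc, hinv' m, Matrix.one_mul]
      · rw [Function.update_of_ne hmi, Function.update_of_ne hmi, hsherm m, hss m]
    rw [hw, factorAction_tupleAction, tensorInner_tupleAction_left, tupleAction_tupleAction, harg]
  have htr : ∀ i, (M i * ((s i)⁻¹ * X i * (s i)⁻¹)).trace
      = tensorInner v (tupleAction (Function.update x i (X i)) v) / f0 := by
    intro i
    rw [hM i _ (hH i), hfac i, hwx]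
  set D : ℂ := ∑ i : Fin d, tensorInner v (tupleAction (Function.update x i (X i)) v) with hD
  -- the derivative of the inner product
  have hg : HasDerivAt (fun t : ℝ => tensorInner v (tupleAction (fun i => x i + t • X i) v)) D 0 := by
    have h1 : ∀ j j' : (∀ i : Fin d, Fin (n i)),
        HasDerivAt (fun t : ℝ => ∏ i : Fin d, (x i + t • X i) (j i) (j' i))
          (∑ k : Fin d, (∏ m ∈ Finset.univ.erase k, x m (j m) (j' m)) * X k (j k) (j' k)) 0 := by
      intro j j'
      have hφ : ∀ i : Fin d, HasDerivAt (fun t : ℝ => (x i + t • X i) (j i) (j' i))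
          (X i (j i) (j' i)) 0 := by
        intro i
        have heq : (fun t : ℝ => (x i + t • X i) (j i) (j' i))
            = fun t : ℝ => x i (j i) (j' i) + t • X i (j i) (j' i) := by
          funext t; simp
        rw [heq]
        simpa using (((hasDerivAt_id (0:ℝ)).smul_const (X i (j i) (j' i))).const_add
          (x i (j i) (j' i)))
      have h2 := HasDerivAt.fun_finsetProd (u := Finset.univ) (fun i _ => hφ i)
      simpa [smul_eq_mul] using h2
    have h3 := HasDerivAt.fun_sum (u := Finset.univ) fun j (_ : j ∈ Finset.univ) =>
      ((HasDerivAt.fun_sum (u := Finset.univ) fun j' (_ : j' ∈ Finset.univ) =>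
        ((h1 j j').mul_const (v j'))).const_mul ((starRingEnd ℂ) (v j)))
    have h4 : HasDerivAt (fun t : ℝ => tensorInner v (tupleAction (fun i => x i + t • X i) v))
        (∑ j : (∀ i : Fin d, Fin (n i)), (starRingEnd ℂ) (v j) *
          ∑ j' : (∀ i : Fin d, Fin (n i)),
            (∑ k : Fin d, (∏ m ∈ Finset.univ.erase k, x m (j m) (j' m)) * X k (j k) (j' k))
              * v j') 0 := h3
    convert h4 using 1
    rw [hD]
    simp only [tensorInner, tupleAction, prod_update_matrix, Finset.mul_sum, Finset.sum_mul]
    rw [Finset.sum_comm]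
    refine Finset.sum_congr rfl fun j _ => ?_
    rw [Finset.sum_comm]
    refine Finset.sum_congr rfl fun j' _ => ?_
    refine Finset.sum_congr rfl fun k _ => ?_
    ring
  -- pass to real part
  have hgre : HasDerivAt
      (fun t : ℝ => ((tensorInner v (tupleAction (fun i => x i + t • X i) v)).re)) D.re 0 := by
    have := (Complex.reCLM.hasFDerivAt).comp_hasDerivAt 0 hg
    exact this
  have hval : (fun i => x i + (0:ℝ) • X i) = x := funext fun i => by simp
  have hne : (tensorInner v (tupleAction (fun i => x i + (0:ℝ) • X i) v)).re ≠ 0 := by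
    rw [hval, ← hf0, hf0re]; exact hRpos.ne'
  have hlog := hgre.log hne
  have hfinal : (∑ i : Fin d, ((M i * ((s i)⁻¹ * X i * (s i)⁻¹)).trace).re)
      = D.re / (tensorInner v (tupleAction (fun i => x i + (0:ℝ) • X i) v)).re := by
    rw [hval, ← hf0, hf0re]
    have h5 : ∀ i : Fin d, ((M i * ((s i)⁻¹ * X i * (s i)⁻¹)).trace).re
        = (tensorInner v (tupleAction (Function.update x i (X i)) v)).re / R := by
      intro i
      rw [htr i, hf0R, Complex.div_ofReal_re]
    rw [Finset.sum_congr rfl fun i _ => h5 i, hD, Complex.re_sum, Finset.sum_div]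
  rw [hfinal]
  exact hlog
end
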